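/- arXiv:1512.02113 — 12 statements merged into one kernel-verified Lean document; each statement's English description precedes it below -/
import Mathlib

section
/- Let φ and ψ be unit vectors in ℂ² that are linearly independent (representing distinct pure states) and nonorthogonal, i.e. ⟨ψ, φ⟩ ≠ 0. Let γ be a unit vector in ℂ² that is mutually unbiased to both φ and ψ, i.e. |⟨γ, φ⟩| = |⟨ψ, γ⟩| = 1/√2. Then the weak value of the projector onto γ, namely W_{φ,ψ}(|γ⟩⟨γ|) = ⟨ψ, γ⟩⟨γ, φ⟩ / ⟨ψ, φ⟩, has nonzero imaginary part. -/
noncomputable section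

/-- The rank-one projector `|v⟩⟨v|` with entries `v i * conj (v j)`. -/
def proj (v : EuclideanSpace ℂ (Fin 2)) : Matrix (Fin 2) (Fin 2) ℂ :=
  Matrix.of fun i j => v i * star (v j)

/-- Matrix-vector multiplication, valued in `EuclideanSpace ℂ (Fin 2)`. -/
def mulVecE (M : Matrix (Fin 2) (Fin 2) ℂ) (v : EuclideanSpace ℂ (Fin 2)) :
    EuclideanSpace ℂ (Fin 2) :=
  (WithLp.equiv 2 (Fin 2 → ℂ)).symm (M.mulVec ((WithLp.equiv 2 (Fin 2 → ℂ)) v))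

/-- The weak value `W_{φ,ψ}(M) = ⟨ψ, Mφ⟩ / ⟨ψ, φ⟩`. -/
def weak (φ ψ : EuclideanSpace ℂ (Fin 2)) (M : Matrix (Fin 2) (Fin 2) ℂ) : ℂ :=
  (inner ℂ ψ (mulVecE M φ) : ℂ) / (inner ℂ ψ φ : ℂ)

private lemma norm_one_sum (v : EuclideanSpace ℂ (Fin 2)) (hv : ‖v‖ = 1) :
    (starRingEnd ℂ) (v 0) * v 0 + (starRingEnd ℂ) (v 1) * v 1 = 1 := by
  have := inner_self_eq_norm_sq_to_K (𝕜 := ℂ) v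
  rw [hv] at this
  simp only [PiLp.inner_apply, Fin.sum_univ_two, RCLike.inner_apply, Complex.ofReal_one,
    one_pow, RCLike.ofReal_one] at this
  linear_combination this

/-- if `γ` is mutually unbiased to both the pre-selected state `φ` and the
post-selected state `ψ` (which are distinct and nonorthogonal), then the weak value of
`|γ⟩⟨γ|` has nonzero imaginary part. -/
theorem stmt0 (φ ψ γ : EuclideanSpace ℂ (Fin 2))
    (hφ : ‖φ‖ = 1) (hψ : ‖ψ‖ = 1) (hγ : ‖γ‖ = 1)
    (hind : LinearIndependent ℂ ![φ, ψ])
    (hno : (inner ℂ ψ φ : ℂ) ≠ 0)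
    (hmu1 : ‖(inner ℂ γ φ : ℂ)‖ = 1 / Real.sqrt 2)
    (hmu2 : ‖(inner ℂ ψ γ : ℂ)‖ = 1 / Real.sqrt 2) :
    (weak φ ψ (proj γ)).im ≠ 0 := by
  intro him
  have hg := norm_one_sum γ hγ
  have hf := norm_one_sum φ hφ
  have hp := norm_one_sum ψ hψ
  set a : ℂ := inner ℂ ψ γ with ha
  set b : ℂ := inner ℂ γ φ with hb
  set c : ℂ := inner ℂ ψ φ with hc
  set a' : ℂ := (starRingEnd ℂ) (ψ 1) * (starRingEnd ℂ) (γ 0)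
      - (starRingEnd ℂ) (ψ 0) * (starRingEnd ℂ) (γ 1) with ha'
  set b' : ℂ := γ 0 * φ 1 - γ 1 * φ 0 with hb'
  -- decomposition of the inner product along γ and γ⊥
  have hsum : c = a * b + a' * b' := by
    rw [ha, hb, hc, ha', hb']
    simp only [PiLp.inner_apply, Fin.sum_univ_two, RCLike.inner_apply]
    linear_combination (-((starRingEnd ℂ) (ψ 0) * φ 0 + (starRingEnd ℂ) (ψ 1) * φ 1)) * hg
  -- the numerator of the weak value
  have hnum : (inner ℂ ψ (mulVecE (proj γ) φ) : ℂ) = a * b := by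
    rw [ha, hb]
    simp only [PiLp.inner_apply, Fin.sum_univ_two, RCLike.inner_apply, mulVecE, proj,
      WithLp.equiv_symm_apply, WithLp.equiv_apply, Matrix.mulVec, dotProduct,
      Matrix.of_apply, starRingEnd_apply]
    ring
  -- moduli
  have hhalf : (1 / Real.sqrt 2) ^ 2 = 1 / 2 := by
    rw [div_pow, one_pow, Real.sq_sqrt] <;> norm_num
  have hb2 : Complex.normSq b = 1 / 2 := by rw [← Complex.sq_norm, hb, hmu1, hhalf]
  have ha2 : Complex.normSq a = 1 / 2 := by rw [← Complex.sq_norm, ha, hmu2, hhalf]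
  have hb'2 : Complex.normSq b' = 1 / 2 := by
    have key : (Complex.normSq b : ℂ) + (Complex.normSq b' : ℂ) = 1 := by
      rw [← Complex.mul_conj, ← Complex.mul_conj, hb, hb']
      simp only [PiLp.inner_apply, Fin.sum_univ_two, RCLike.inner_apply, map_add, map_mul,
        map_sub, Complex.conj_conj]
      linear_combination ((starRingEnd ℂ) (φ 0) * φ 0 + (starRingEnd ℂ) (φ 1) * φ 1) * hg + hf
    rw [hb2] at key
    have key2 : ((1 / 2 + Complex.normSq b' : ℝ) : ℂ) = ((1 : ℝ) : ℂ) := by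
      push_cast at key ⊢; linear_combination key
    have := Complex.ofReal_inj.mp key2
    linarith
  have ha'2 : Complex.normSq a' = 1 / 2 := by
    have key : (Complex.normSq a : ℂ) + (Complex.normSq a' : ℂ) = 1 := by
      rw [← Complex.mul_conj, ← Complex.mul_conj, ha, ha']
      simp only [PiLp.inner_apply, Fin.sum_univ_two, RCLike.inner_apply, map_add, map_mul,
        map_sub, Complex.conj_conj]
      linear_combination ((starRingEnd ℂ) (γ 0) * γ 0 + (starRingEnd ℂ) (γ 1) * γ 1) * hp + hg
    rw [ha2] at key
    have key2 : ((1 / 2 + Complex.normSq a' : ℝ) : ℂ) = ((1 : ℝ) : ℂ) := by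
      push_cast at key ⊢; linear_combination key
    have := Complex.ofReal_inj.mp key2
    linarith
  -- the weak value is real
  have hWdef : weak φ ψ (proj γ) = a * b / c := by rw [weak, hnum, hc]
  set t : ℝ := (a * b / c).re with ht
  have hWre : a * b / c = (t : ℂ) := by
    apply Complex.ext
    · simp [ht]
    · rw [hWdef] at him; simpa using him
  have hab : a * b = (t : ℂ) * c := by
    rw [← hWre]; field_simp
  have hab' : a' * b' = ((1 - t : ℝ) : ℂ) * c := by
    push_cast
    linear_combination -hsum - hab
  have hNc : Complex.normSq c ≠ 0 := by
    simpa [Complex.normSq_eq_zero] using hno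
  have eq1 : t ^ 2 * Complex.normSq c = 1 / 4 := by
    have := congrArg Complex.normSq hab
    rw [Complex.normSq_mul, Complex.normSq_mul, Complex.normSq_ofReal, ha2, hb2] at this
    linear_combination -this
  have eq2 : (1 - t) ^ 2 * Complex.normSq c = 1 / 4 := by
    have := congrArg Complex.normSq hab'
    rw [Complex.normSq_mul, Complex.normSq_mul, Complex.normSq_ofReal, ha'2, hb'2] at this
    linear_combination -this
  have ht12 : t = 1 / 2 := by
    have h := eq1.trans eq2.symm
    have h3 : (2 * t - 1) * Complex.normSq c = 0 := by linear_combination h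
    rcases mul_eq_zero.mp h3 with h4 | h4
    · linarith
    · exact absurd h4 hNc
  have hN1 : Complex.normSq c = 1 := by
    rw [ht12] at eq1; linarith
  -- Cauchy–Schwarz equality ⇒ φ, ψ dependent
  have habs : ‖c‖ = ‖ψ‖ * ‖φ‖ := by
    rw [hψ, hφ, Complex.norm_def, hN1, Real.sqrt_one, one_mul]
  have hψ0 : ψ ≠ 0 := by intro h; rw [h] at hψ; simp at hψ
  have hφ0 : φ ≠ 0 := by intro h; rw [h] at hφ; simp at hφ
  obtain ⟨r, hr0, hrφ⟩ := (norm_inner_eq_norm_iff hψ0 hφ0).mp (by rw [← hc]; exact habs)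
  have h2 := (linearIndependent_fin2.mp hind).2 r
  simp only [Matrix.cons_val_one, Matrix.head_cons, Matrix.cons_val_zero] at h2
  exact h2 hrφ.symm
end
end

section
/- Let φ and ψ be unit vectors in ℂ² with ⟨ψ, φ⟩ ≠ 0, and let I be the 2×2 identity matrix. For any real numbers a and b, the weak value W_{φ,ψ}(a(|φ⟩⟨φ| − I/2) + b(|ψ⟩⟨ψ| − I/2)) is a real number (its imaginary part is zero). In other words, every Hermitian operator in the real span of |φ⟩⟨φ| − I/2 and |ψ⟩⟨ψ| − I/2 (the PPS plane) has real weak value. -/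
noncomputable section

/-- every operator in the PPS plane, i.e. the real span of
`|φ⟩⟨φ| - I/2` and `|ψ⟩⟨ψ| - I/2`, has real weak value. -/
theorem stmt2 (φ ψ : EuclideanSpace ℂ (Fin 2))
    (hφ : ‖φ‖ = 1) (hψ : ‖ψ‖ = 1) (hno : (inner ℂ ψ φ : ℂ) ≠ 0) (a b : ℝ) :
    (weak φ ψ ((a : ℂ) • (proj φ - (1 / 2 : ℂ) • (1 : Matrix (Fin 2) (Fin 2) ℂ))
        + (b : ℂ) • (proj ψ - (1 / 2 : ℂ) • (1 : Matrix (Fin 2) (Fin 2) ℂ)))).im = 0 := by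
  have hφ2 : (inner ℂ φ φ : ℂ) = 1 := by
    rw [inner_self_eq_norm_sq_to_K, hφ]; norm_num
  have hψ2 : (inner ℂ ψ ψ : ℂ) = 1 := by
    rw [inner_self_eq_norm_sq_to_K, hψ]; norm_num
  have key : weak φ ψ ((a : ℂ) • (proj φ - (1 / 2 : ℂ) • (1 : Matrix (Fin 2) (Fin 2) ℂ))
        + (b : ℂ) • (proj ψ - (1 / 2 : ℂ) • (1 : Matrix (Fin 2) (Fin 2) ℂ))) = ((a + b) / 2 : ℝ) := by
    simp only [PiLp.inner_apply, RCLike.inner_apply, Fin.sum_univ_two] at hφ2 hψ2 hno ⊢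
    simp only [weak, mulVecE, proj, Matrix.mulVec, dotProduct, PiLp.inner_apply,
      RCLike.inner_apply, Fin.sum_univ_two, WithLp.equiv_symm_apply, PiLp.toLp_apply, WithLp.equiv_apply,
      Matrix.add_apply, Matrix.smul_apply, Matrix.sub_apply, Matrix.one_apply, Matrix.of_apply,
      Fin.isValue, smul_eq_mul]
    field_simp
    simp only [Complex.star_def, if_true, if_false, show (1 : Fin 2) ≠ 0 by decide, show (0 : Fin 2) ≠ 1 by decide]
    push_cast
    ring_nf
    ring_nf at hφ2 hψ2 hno
    linear_combination (2*(a:ℂ)*((starRingEnd ℂ) (ψ 0) * φ 0 + (starRingEnd ℂ) (ψ 1) * φ 1)) * hφ2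
      + (2*(b:ℂ)*((starRingEnd ℂ) (ψ 0) * φ 0 + (starRingEnd ℂ) (ψ 1) * φ 1)) * hψ2
  rw [key]; exact Complex.ofReal_im _
end
end

section
/- Let φ and ψ be unit vectors in ℂ² that are linearly independent and satisfy ⟨ψ, φ⟩ ≠ 0, and let M be a 2×2 Hermitian matrix with trace 0. Then the weak value W_{φ,ψ}(M) is real if and only if M lies in the real span of the two matrices |φ⟩⟨φ| − I/2 and |ψ⟩⟨ψ| − I/2, where I is the 2×2 identity matrix. -/
noncomputable section

lemma mulVecE_eq (M : Matrix (Fin 2) (Fin 2) ℂ) (v : EuclideanSpace ℂ (Fin 2)) :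
    mulVecE M v = Matrix.toEuclideanLin M v := rfl

lemma proj_apply (v w : EuclideanSpace ℂ (Fin 2)) :
    mulVecE (proj v) w = (inner ℂ v w : ℂ) • v := by
  ext i
  simp [mulVecE, proj, Matrix.mulVec, dotProduct, PiLp.inner_apply,
    mul_comm, mul_left_comm, RCLike.inner_apply, mul_add]
  fin_cases i <;> rfl

lemma one_apply' (w : EuclideanSpace ℂ (Fin 2)) : mulVecE 1 w = w := by
  ext i; simp [mulVecE]

lemma smul_apply' (c : ℂ) (M : Matrix (Fin 2) (Fin 2) ℂ) (w : EuclideanSpace ℂ (Fin 2)) :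
    mulVecE (c • M) w = c • mulVecE M w := by
  simp [mulVecE_eq, map_smul]

lemma add_apply' (M N : Matrix (Fin 2) (Fin 2) ℂ) (w : EuclideanSpace ℂ (Fin 2)) :
    mulVecE (M + N) w = mulVecE M w + mulVecE N w := by
  simp [mulVecE_eq, map_add]

lemma sub_apply' (M N : Matrix (Fin 2) (Fin 2) ℂ) (w : EuclideanSpace ℂ (Fin 2)) :
    mulVecE (M - N) w = mulVecE M w - mulVecE N w := by
  simp [mulVecE_eq, map_sub]

open Complex in
lemma key_scalar (c p q r s : ℂ) (hc0 : c ≠ 0) (hns : Complex.normSq c ≠ 1)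
    (htr : p + s = 0)
    (e1 : (p + q * (starRingEnd ℂ) c).im = 0)
    (e2 : (r * c + s).im = 0)
    (e3 : r + s * (starRingEnd ℂ) c = (starRingEnd ℂ) p * (starRingEnd ℂ) c + (starRingEnd ℂ) q)
    (e5 : ((p * c + q) / c).im = 0) :
    ∃ a b : ℝ, p = ((a : ℂ) - b) / 2 ∧ q = (b : ℂ) * c ∧
      r = (a : ℂ) * (starRingEnd ℂ) c ∧ s = ((b : ℂ) - a) / 2 := by
  have hns0 : Complex.normSq c ≠ 0 := by simpa using hc0
  have hcc : c * (starRingEnd ℂ) c = (Complex.normSq c : ℂ) := by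
    exact Complex.mul_conj c
  have hdiv : (p * c + q) / c = p + q * (starRingEnd ℂ) c / ((Complex.normSq c : ℝ) : ℂ) := by
    have hnsC : ((Complex.normSq c : ℝ) : ℂ) ≠ 0 := by exact_mod_cast hns0
    field_simp
    rw [← hcc]
    ring
  set ns : ℝ := Complex.normSq c with hnsdef
  have hnspos : 0 < ns := Complex.normSq_pos.mpr hc0
  set x : ℂ := q * (starRingEnd ℂ) c with hxdef
  set y : ℂ := r * c with hydef
  have e1' : p.im + x.im = 0 := by simpa [Complex.add_im] using e1
  have e5' : p.im + x.im / ns = 0 := by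
    rw [hdiv] at e5
    simpa [Complex.add_im, Complex.div_ofReal_im] using e5
  have hxim : x.im = 0 := by
    have h1 : x.im / ns = x.im := by linarith
    have h2 : x.im * (1 - ns) = 0 := by
      field_simp at h1
      linarith
    rcases mul_eq_zero.mp h2 with h | h
    · exact h
    · exact absurd (by linarith : ns = 1) hns
  have hpim : p.im = 0 := by linarith
  have hsp : s = -p := by linear_combination htr
  have hsim : s.im = 0 := by rw [hsp]; simp [hpim]
  have hyim : y.im = 0 := by
    have h := Complex.add_im y s
    rw [e2] at h
    linarith
  -- realness as complex equalities
  have hxre : x = ((x.re : ℝ) : ℂ) := by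
    apply Complex.ext <;> simp [hxim]
  have hyre : y = ((y.re : ℝ) : ℂ) := by
    apply Complex.ext <;> simp [hyim]
  have hpre : p = ((p.re : ℝ) : ℂ) := by
    apply Complex.ext <;> simp [hpim]
  -- key complex identities
  have hq : q * ((ns : ℝ) : ℂ) = x * c := by
    rw [hxdef, ← hcc]; ring
  have hr : r * ((ns : ℝ) : ℂ) = y * (starRingEnd ℂ) c := by
    rw [hydef]
    have hcc' : (starRingEnd ℂ) c * c = ((ns:ℝ) : ℂ) := by rw [mul_comm]; exact hcc
    rw [← hcc']; ring
  have hnsC : ((ns : ℝ) : ℂ) ≠ 0 := by exact_mod_cast hns0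
  have hqbc : q = ((x.re / ns : ℝ) : ℂ) * c := by
    push_cast
    rw [div_mul_eq_mul_div, eq_div_iff hnsC, ← hxre, hq]
  have hrac : r = ((y.re / ns : ℝ) : ℂ) * (starRingEnd ℂ) c := by
    push_cast
    rw [div_mul_eq_mul_div, eq_div_iff hnsC, ← hyre, hr]
  -- use e3
  have hconjp : (starRingEnd ℂ) p = p := Complex.conj_eq_iff_im.mpr hpim
  have hconjq : (starRingEnd ℂ) q = ((x.re / ns : ℝ) : ℂ) * (starRingEnd ℂ) c := by
    rw [hqbc, map_mul, Complex.conj_ofReal]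
  have hcne : (starRingEnd ℂ) c ≠ 0 := by simpa using hc0
  have hae : ((y.re / ns : ℝ) : ℂ) = 2 * p + ((x.re / ns : ℝ) : ℂ) := by
    have h := e3
    rw [hsp, hconjp, hconjq, hrac] at h
    have h2 : ((y.re / ns : ℝ) : ℂ) * (starRingEnd ℂ) c
        = (2 * p + ((x.re / ns : ℝ) : ℂ)) * (starRingEnd ℂ) c := by
      linear_combination h
    exact mul_right_cancel₀ hcne h2
  refine ⟨y.re / ns, x.re / ns, ?_, hqbc, hrac, ?_⟩
  · rw [hae]; ring
  · rw [hsp, hae]; ring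


set_option maxHeartbeats 2000000 in
lemma stmt3_aux (φ ψ : EuclideanSpace ℂ (Fin 2))
    (hφ : ‖φ‖ = 1) (hψ : ‖ψ‖ = 1)
    (hind : LinearIndependent ℂ ![φ, ψ])
    (hno : (inner ℂ ψ φ : ℂ) ≠ 0)
    (M : Matrix (Fin 2) (Fin 2) ℂ) (hM : M.IsHermitian) (htr : M.trace = 0) :
    (weak φ ψ M).im = 0 ↔
      ∃ a b : ℝ, M = (a : ℂ) • (proj φ - (1 / 2 : ℂ) • (1 : Matrix (Fin 2) (Fin 2) ℂ))
        + (b : ℂ) • (proj ψ - (1 / 2 : ℂ) • (1 : Matrix (Fin 2) (Fin 2) ℂ)) := by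
  set c : ℂ := inner ℂ ψ φ with hc
  have hφφ : (inner ℂ φ φ : ℂ) = 1 := by
    rw [inner_self_eq_norm_sq_to_K, hφ]; norm_num
  have hψψ : (inner ℂ ψ ψ : ℂ) = 1 := by
    rw [inner_self_eq_norm_sq_to_K, hψ]; norm_num
  have hφψ : (inner ℂ φ ψ : ℂ) = starRingEnd ℂ c := by rw [hc, ← inner_conj_symm]
  -- action of the plane matrices
  have hAφ : mulVecE (proj φ - (1 / 2 : ℂ) • (1 : Matrix (Fin 2) (Fin 2) ℂ)) φ
      = ((1:ℂ)/2) • φ := by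
    rw [sub_apply', proj_apply, smul_apply', one_apply', hφφ]
    module
  have hBφ : mulVecE (proj ψ - (1 / 2 : ℂ) • (1 : Matrix (Fin 2) (Fin 2) ℂ)) φ
      = c • ψ - ((1:ℂ)/2) • φ := by
    rw [sub_apply', proj_apply, smul_apply', one_apply', ← hc]
  have hAψ : mulVecE (proj φ - (1 / 2 : ℂ) • (1 : Matrix (Fin 2) (Fin 2) ℂ)) ψ
      = (starRingEnd ℂ c) • φ - ((1:ℂ)/2) • ψ := by
    rw [sub_apply', proj_apply, smul_apply', one_apply', hφψ]
  have hBψ : mulVecE (proj ψ - (1 / 2 : ℂ) • (1 : Matrix (Fin 2) (Fin 2) ℂ)) ψ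
      = ((1:ℂ)/2) • ψ := by
    rw [sub_apply', proj_apply, smul_apply', one_apply', hψψ]
    module
  constructor
  · intro him
    -- basis from linear independence
    have hcard : Fintype.card (Fin 2) = Module.finrank ℂ (EuclideanSpace ℂ (Fin 2)) := by
      simp
    set hb : Module.Basis (Fin 2) ℂ (EuclideanSpace ℂ (Fin 2)) :=
      basisOfLinearIndependentOfCardEqFinrank hind hcard with hbdef
    have hbc : ⇑hb = ![φ, ψ] := coe_basisOfLinearIndependentOfCardEqFinrank hind hcard
    have hb0 : hb 0 = φ := by rw [hbc]; rfl
    have hb1 : hb 1 = ψ := by rw [hbc]; rfl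
    set T : EuclideanSpace ℂ (Fin 2) →ₗ[ℂ] EuclideanSpace ℂ (Fin 2) :=
      Matrix.toEuclideanLin M with hT
    set p : ℂ := hb.repr (T φ) 0 with hp
    set q : ℂ := hb.repr (T φ) 1 with hq
    set r : ℂ := hb.repr (T ψ) 0 with hr
    set s : ℂ := hb.repr (T ψ) 1 with hs
    have hTφ : T φ = p • φ + q • ψ := by
      conv_lhs => rw [← hb.sum_repr (T φ)]
      rw [Fin.sum_univ_two, hb0, hb1]
    have hTψ : T ψ = r • φ + s • ψ := by
      conv_lhs => rw [← hb.sum_repr (T ψ)]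
      rw [Fin.sum_univ_two, hb0, hb1]
    -- trace
    have htrT : p + s = 0 := by
      have h1 : LinearMap.trace ℂ _ T = M.trace := by
        rw [hT, Matrix.toEuclideanLin_eq_toLin,
          LinearMap.trace_eq_matrix_trace ℂ (PiLp.basisFun 2 ℂ (Fin 2)),
          LinearMap.toMatrix_toLin]
      have h2 : LinearMap.trace ℂ _ T = p + s := by
        rw [LinearMap.trace_eq_matrix_trace ℂ hb, Matrix.trace_fin_two,
          LinearMap.toMatrix_apply, LinearMap.toMatrix_apply, hb0, hb1]
      rw [h1, htr] at h2
      exact h2.symm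
    -- symmetry
    have hsym : T.IsSymmetric := Matrix.isHermitian_iff_isSymmetric.mp hM
    -- inner product values
    have hiφTφ : (inner ℂ φ (T φ) : ℂ) = p + q * (starRingEnd ℂ) c := by
      rw [hTφ, inner_add_right, inner_smul_right, inner_smul_right, hφφ, hφψ]; ring
    have hiψTφ : (inner ℂ ψ (T φ) : ℂ) = p * c + q := by
      rw [hTφ, inner_add_right, inner_smul_right, inner_smul_right, hψψ, ← hc]; ring
    have hiφTψ : (inner ℂ φ (T ψ) : ℂ) = r + s * (starRingEnd ℂ) c := by
      rw [hTψ, inner_add_right, inner_smul_right, inner_smul_right, hφφ, hφψ]; ring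
    have hiψTψ : (inner ℂ ψ (T ψ) : ℂ) = r * c + s := by
      rw [hTψ, inner_add_right, inner_smul_right, inner_smul_right, hψψ, ← hc]; ring
    have e1 : (p + q * (starRingEnd ℂ) c).im = 0 := by
      rw [← hiφTφ]
      have h := hsym φ φ
      rw [← inner_conj_symm (T φ) φ] at h
      have := Complex.conj_eq_iff_im.mp h
      exact this
    have e2 : (r * c + s).im = 0 := by
      rw [← hiψTψ]
      have h := hsym ψ ψ
      rw [← inner_conj_symm (T ψ) ψ] at h
      exact Complex.conj_eq_iff_im.mp h
    have e3 : r + s * (starRingEnd ℂ) c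
        = (starRingEnd ℂ) p * (starRingEnd ℂ) c + (starRingEnd ℂ) q := by
      have h := hsym φ ψ
      have h2 : (starRingEnd ℂ) (inner ℂ ψ (T φ) : ℂ) = (inner ℂ φ (T ψ) : ℂ) := by
        rw [inner_conj_symm]; exact h
      rw [hiψTφ, hiφTψ] at h2
      rw [← h2, map_add, map_mul]
    have e5 : ((p * c + q) / c).im = 0 := by
      rw [← hiψTφ]
      rw [weak, mulVecE_eq, ← hT, ← hc] at him
      exact him
    -- strict Cauchy-Schwarz
    have hφ0 : φ ≠ 0 := fun h => by simp [h] at hφ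
    have hψ0 : ψ ≠ 0 := fun h => by simp [h] at hψ
    have hns : Complex.normSq c ≠ 1 := by
      intro h
      have habs : ‖c‖ = 1 := by
        have := Complex.normSq_eq_norm_sq c
        rw [h] at this
        nlinarith [norm_nonneg c]
      have heq : ‖(inner ℂ ψ φ : ℂ)‖ = ‖ψ‖ * ‖φ‖ := by rw [hψ, hφ, ← hc, habs]; norm_num
      obtain ⟨t, ht0, htφ⟩ := (norm_inner_eq_norm_iff hψ0 hφ0).mp heq
      have h2 := (linearIndependent_fin2.mp hind).2 t
      simp only [Matrix.cons_val_one, Matrix.head_cons, Matrix.cons_val_zero] at h2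
      exact h2 htφ.symm
    obtain ⟨a, b, hpv, hqv, hrv, hsv⟩ := key_scalar c p q r s hno hns htrT e1 e2 e3 e5
    refine ⟨a, b, ?_⟩
    have hinj := Matrix.toEuclideanLin (𝕜 := ℂ) (m := Fin 2) (n := Fin 2) |>.injective
    apply hinj
    refine hb.ext (Fin.forall_fin_two.mpr ⟨?_, ?_⟩)
    · rw [hb0]
      show T φ = _
      rw [hTφ, map_add]
      show _ = mulVecE _ φ + mulVecE _ φ
      rw [smul_apply', smul_apply', hAφ, hBφ, hpv, hqv]
      module
    · rw [hb1]
      show T ψ = _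
      rw [hTψ, map_add]
      show _ = mulVecE _ ψ + mulVecE _ ψ
      rw [smul_apply', smul_apply', hAψ, hBψ, hrv, hsv]
      module
  · rintro ⟨a, b, rfl⟩
    rw [weak, add_apply', smul_apply', smul_apply', hAφ, hBφ]
    have : (inner ℂ ψ ((a:ℂ) • (((1:ℂ)/2) • φ) + (b:ℂ) • (c • ψ - ((1:ℂ)/2) • φ)) : ℂ)
        = (((a:ℝ)+b)/2 : ℂ) * c := by
      rw [inner_add_right, inner_smul_right, inner_smul_right, inner_smul_right,
        inner_sub_right, inner_smul_right, inner_smul_right, hψψ, ← hc]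
      ring
    rw [this, mul_div_assoc, div_self hno, mul_one]
    simp


/-- for distinct nonorthogonal pre- and post-selected states and a
trace-0 Hermitian `M`, the weak value `W_{φ,ψ}(M)` is real iff `M` lies in the real
span of `|φ⟩⟨φ| - I/2` and `|ψ⟩⟨ψ| - I/2` (the PPS plane). -/
theorem stmt3 (φ ψ : EuclideanSpace ℂ (Fin 2))
    (hφ : ‖φ‖ = 1) (hψ : ‖ψ‖ = 1)
    (hind : LinearIndependent ℂ ![φ, ψ])
    (hno : (inner ℂ ψ φ : ℂ) ≠ 0)
    (M : Matrix (Fin 2) (Fin 2) ℂ) (hM : M.IsHermitian) (htr : M.trace = 0) :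
    (weak φ ψ M).im = 0 ↔
      ∃ a b : ℝ, M = (a : ℂ) • (proj φ - (1 / 2 : ℂ) • (1 : Matrix (Fin 2) (Fin 2) ℂ))
        + (b : ℂ) • (proj ψ - (1 / 2 : ℂ) • (1 : Matrix (Fin 2) (Fin 2) ℂ)) :=
  stmt3_aux φ ψ hφ hψ hind hno M hM htr
end
end

section
/- Let φ and ψ be unit vectors in ℂ² with ⟨ψ, φ⟩ ≠ 0, let I be the 2×2 identity matrix, and set P_{φ,ψ} := (1/2)(|φ⟩⟨φ| + |ψ⟩⟨ψ| − I). Then for all real numbers s and t, the weak value W_{φ,ψ}(s·P_{φ,ψ} + t·(|φ⟩⟨φ| − |ψ⟩⟨ψ|)) equals s/2. That is, each line K_{φ,ψ}(s) in the PPS plane parallel to the direction |φ⟩⟨φ| − |ψ⟩⟨ψ| and passing through s·P_{φ,ψ} is mapped entirely to the single weak value s/2. -/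
noncomputable section

/-- with `P_{φ,ψ} = (1/2)(|φ⟩⟨φ| + |ψ⟩⟨ψ| - I)`, every point of the line
`K_{φ,ψ}(s)` through `s • P_{φ,ψ}` in direction `|φ⟩⟨φ| - |ψ⟩⟨ψ|` has weak value `s/2`. -/
theorem stmt5 (φ ψ : EuclideanSpace ℂ (Fin 2))
    (hφ : ‖φ‖ = 1) (hψ : ‖ψ‖ = 1) (hno : (inner ℂ ψ φ : ℂ) ≠ 0)
    (P : Matrix (Fin 2) (Fin 2) ℂ)
    (hP : P = (1 / 2 : ℂ) • (proj φ + proj ψ - (1 : Matrix (Fin 2) (Fin 2) ℂ)))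
    (s t : ℝ) :
    weak φ ψ ((s : ℂ) • P + (t : ℂ) • (proj φ - proj ψ)) = (s : ℂ) / 2 := by
  have hφ1 : (starRingEnd ℂ) (φ 0) * φ 0 + (starRingEnd ℂ) (φ 1) * φ 1 = 1 := by
    have := inner_self_eq_norm_sq_to_K (𝕜 := ℂ) φ
    rw [hφ] at this
    simp only [PiLp.inner_apply, Fin.sum_univ_two, RCLike.inner_apply] at this
    norm_num at this
    linear_combination this
  have hψ1 : (starRingEnd ℂ) (ψ 0) * ψ 0 + (starRingEnd ℂ) (ψ 1) * ψ 1 = 1 := by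
    have := inner_self_eq_norm_sq_to_K (𝕜 := ℂ) ψ
    rw [hψ] at this
    simp only [PiLp.inner_apply, Fin.sum_univ_two, RCLike.inner_apply] at this
    norm_num at this
    linear_combination this
  have hno' : (starRingEnd ℂ) (ψ 0) * φ 0 + (starRingEnd ℂ) (ψ 1) * φ 1 ≠ 0 := by
    simpa [PiLp.inner_apply, Fin.sum_univ_two, mul_comm] using hno
  simp only [weak, mulVecE, hP, proj, PiLp.inner_apply, Fin.sum_univ_two,
    Matrix.mulVec, dotProduct, Matrix.add_apply, Matrix.sub_apply,
    Matrix.smul_apply, Matrix.one_apply, Matrix.of_apply, WithLp.equiv_symm_apply,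
    WithLp.equiv_apply, smul_eq_mul, RCLike.inner_apply, RCLike.star_def,
    zero_ne_one, one_ne_zero, if_true, if_false]
  rw [div_eq_iff (by simpa [mul_comm] using hno')]
  linear_combination (1/4:ℂ) * (((2*(s:ℂ)+4*t) * hφ1 + (2*(s:ℂ)-4*t) * hψ1) *
    ((starRingEnd ℂ) (ψ 0) * φ 0 + (starRingEnd ℂ) (ψ 1) * φ 1))
end
end

section
/- Let γ and γ⊥ be orthonormal vectors in ℂ², let θ, α ∈ ℝ with ω := α − θ satisfying e^{iω} ≠ −1 and e^{iω} ≠ 1, and set φ = (γ + e^{iθ}γ⊥)/√2 and ψ = (γ + e^{iα}γ⊥)/√2. Let I be the 2×2 identity matrix and P_{φ,ψ} := (1/2)(|φ⟩⟨φ| + |ψ⟩⟨ψ| − I). Then for all real numbers s, t, a, the weak value W_{φ,ψ}(s·P_{φ,ψ} + t·(|φ⟩⟨φ| − |ψ⟩⟨ψ|) + a·(|γ⟩⟨γ| − I/2)) equals (1/2)(s + i·a·tan(ω/2)). -/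
noncomputable section

lemma imv_proj (x y v : EuclideanSpace ℂ (Fin 2)) :
    (inner ℂ x (mulVecE (proj v) y) : ℂ) = (inner ℂ x v : ℂ) * (inner ℂ v y : ℂ) := by
  simp [mulVecE, proj, Matrix.mulVec, dotProduct, PiLp.inner_apply,
    RCLike.inner_apply, Fin.sum_univ_two]
  ring

lemma imv_one (x y : EuclideanSpace ℂ (Fin 2)) :
    (inner ℂ x (mulVecE 1 y) : ℂ) = (inner ℂ x y : ℂ) := by
  simp [mulVecE, Matrix.one_mulVec]

lemma imv_add (x y : EuclideanSpace ℂ (Fin 2)) (A B : Matrix (Fin 2) (Fin 2) ℂ) :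
    (inner ℂ x (mulVecE (A + B) y) : ℂ)
      = (inner ℂ x (mulVecE A y) : ℂ) + (inner ℂ x (mulVecE B y) : ℂ) := by
  simp [mulVecE, Matrix.add_mulVec, PiLp.inner_apply, RCLike.inner_apply,
    Fin.sum_univ_two, Matrix.mulVec, dotProduct]
  ring

lemma imv_sub (x y : EuclideanSpace ℂ (Fin 2)) (A B : Matrix (Fin 2) (Fin 2) ℂ) :
    (inner ℂ x (mulVecE (A - B) y) : ℂ)
      = (inner ℂ x (mulVecE A y) : ℂ) - (inner ℂ x (mulVecE B y) : ℂ) := by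
  simp [mulVecE, Matrix.sub_mulVec, PiLp.inner_apply, RCLike.inner_apply,
    Fin.sum_univ_two, Matrix.mulVec, dotProduct]
  ring

lemma imv_smul (x y : EuclideanSpace ℂ (Fin 2)) (c : ℂ) (A : Matrix (Fin 2) (Fin 2) ℂ) :
    (inner ℂ x (mulVecE (c • A) y) : ℂ) = c * (inner ℂ x (mulVecE A y) : ℂ) := by
  simp [mulVecE, Matrix.smul_mulVec, PiLp.inner_apply, RCLike.inner_apply,
    Fin.sum_univ_two, Matrix.mulVec, dotProduct]
  ring

/-- full geometric decomposition of the weak value: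
`W_{φ,ψ}(s P + t(|φ⟩⟨φ| - |ψ⟩⟨ψ|) + a(|γ⟩⟨γ| - I/2)) = (1/2)(s + i a tan(ω/2))`. -/
theorem stmt6 (γ γperp : EuclideanSpace ℂ (Fin 2))
    (hγ : ‖γ‖ = 1) (hγp : ‖γperp‖ = 1) (horth : (inner ℂ γ γperp : ℂ) = 0)
    (θ α : ℝ) (ω : ℝ) (hω : ω = α - θ)
    (hnon : Complex.exp (ω * Complex.I) ≠ -1)
    (hne : Complex.exp (ω * Complex.I) ≠ 1)
    (φ ψ : EuclideanSpace ℂ (Fin 2))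
    (hφ : φ = (Real.sqrt 2 : ℂ)⁻¹ • (γ + Complex.exp (θ * Complex.I) • γperp))
    (hψ : ψ = (Real.sqrt 2 : ℂ)⁻¹ • (γ + Complex.exp (α * Complex.I) • γperp))
    (P : Matrix (Fin 2) (Fin 2) ℂ)
    (hP : P = (1 / 2 : ℂ) • (proj φ + proj ψ - (1 : Matrix (Fin 2) (Fin 2) ℂ)))
    (s t a : ℝ) :
    weak φ ψ ((s : ℂ) • P + (t : ℂ) • (proj φ - proj ψ)
        + (a : ℂ) • (proj γ - (1 / 2 : ℂ) • (1 : Matrix (Fin 2) (Fin 2) ℂ)))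
      = (1 / 2) * ((s : ℂ) + Complex.I * (a : ℂ) * (Real.tan (ω / 2) : ℂ)) := by
  have hg : (inner ℂ γ γ : ℂ) = 1 := by
    rw [inner_self_eq_norm_sq_to_K, hγ]; norm_num
  have hgp : (inner ℂ γperp γperp : ℂ) = 1 := by
    rw [inner_self_eq_norm_sq_to_K, hγp]; norm_num
  have horth' : (inner ℂ γperp γ : ℂ) = 0 := by
    rw [← inner_conj_symm, horth]; simp
  have hr : ((Real.sqrt 2 : ℂ))⁻¹ * ((Real.sqrt 2 : ℂ))⁻¹ = 1 / 2 := by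
    rw [← mul_inv, ← Complex.ofReal_mul, Real.mul_self_sqrt (by norm_num)]
    norm_num
  have hstar : (starRingEnd ℂ) ((Real.sqrt 2 : ℂ))⁻¹ = ((Real.sqrt 2 : ℂ))⁻¹ := by
    rw [← Complex.ofReal_inv, Complex.conj_ofReal]
  -- abbreviations
  set u := Complex.exp ((ω : ℂ) / 2 * Complex.I) with hu
  set v := Complex.exp (-((ω : ℂ) / 2) * Complex.I) with hv
  have huv : u * v = 1 := by
    rw [hu, hv, ← Complex.exp_add,
      show ((ω:ℂ)/2 * Complex.I + -((ω:ℂ)/2) * Complex.I) = 0 from by ring]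
    exact Complex.exp_zero
  have hu0 : u ≠ 0 := Complex.exp_ne_zero _
  have hv0 : v ≠ 0 := Complex.exp_ne_zero _
  have hexp : Complex.exp ((ω : ℂ) * Complex.I) = u * u := by
    rw [hu, ← Complex.exp_add]; congr 1; ring
  have hsum : u + v ≠ 0 := by
    intro h
    exact hnon (by push_cast; linear_combination hexp + u * h - huv)
  -- conj of exponentials
  have hconj : ∀ x : ℝ, (starRingEnd ℂ) (Complex.exp (x * Complex.I))
      = Complex.exp (-(x : ℂ) * Complex.I) := by
    intro x
    rw [← Complex.exp_conj]
    congr 1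
    simp [Complex.conj_I]
  -- inner products
  have hvv : Complex.exp ((θ:ℂ) * Complex.I) * Complex.exp (-(α:ℂ) * Complex.I) = v * v := by
    rw [hv, ← Complex.exp_add, ← Complex.exp_add]
    congr 1
    rw [hω]; push_cast; ring
  have hψφ : (inner ℂ ψ φ : ℂ) = (1 + v * v) / 2 := by
    rw [hφ, hψ]
    simp only [inner_smul_left, inner_smul_right, inner_add_left, inner_add_right,
      hg, hgp, horth, horth', hstar, hconj]
    linear_combination (1 + Complex.exp ((θ:ℂ) * Complex.I)
      * Complex.exp (-(α:ℂ) * Complex.I)) * hr + (1/2 : ℂ) * hvv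
  have hθθ : Complex.exp ((θ:ℂ) * Complex.I) * Complex.exp (-(θ:ℂ) * Complex.I) = 1 := by
    rw [← Complex.exp_add,
      show ((θ:ℂ) * Complex.I + -(θ:ℂ) * Complex.I) = 0 from by ring]
    exact Complex.exp_zero
  have hφφ : (inner ℂ φ φ : ℂ) = 1 := by
    rw [hφ]
    simp only [inner_smul_left, inner_smul_right, inner_add_left, inner_add_right,
      hg, hgp, horth, horth', hstar, hconj]
    linear_combination (1 + Complex.exp ((θ:ℂ) * Complex.I)
      * Complex.exp (-(θ:ℂ) * Complex.I)) * hr + (1/2 : ℂ) * hθθ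
  have hαα : Complex.exp ((α:ℂ) * Complex.I) * Complex.exp (-(α:ℂ) * Complex.I) = 1 := by
    rw [← Complex.exp_add,
      show ((α:ℂ) * Complex.I + -(α:ℂ) * Complex.I) = 0 from by ring]
    exact Complex.exp_zero
  have hψψ : (inner ℂ ψ ψ : ℂ) = 1 := by
    rw [hψ]
    simp only [inner_smul_left, inner_smul_right, inner_add_left, inner_add_right,
      hg, hgp, horth, horth', hstar, hconj]
    linear_combination (1 + Complex.exp ((α:ℂ) * Complex.I)
      * Complex.exp (-(α:ℂ) * Complex.I)) * hr + (1/2 : ℂ) * hαα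
  have hψγ : (inner ℂ ψ γ : ℂ) = ((Real.sqrt 2 : ℂ))⁻¹ := by
    rw [hψ]
    simp only [inner_smul_left, inner_add_left, hg, horth', hstar, hconj]
    ring
  have hγφ : (inner ℂ γ φ : ℂ) = ((Real.sqrt 2 : ℂ))⁻¹ := by
    rw [hφ]
    simp only [inner_smul_right, inner_add_right, inner_smul_right, hg, horth]
    ring
  have hc0 : (inner ℂ ψ φ : ℂ) ≠ 0 := by
    rw [hψφ]
    intro h
    apply hsum
    have h2 : (1 : ℂ) + v * v = 0 := by linear_combination 2 * h
    have : v * (u + v) = 0 := by linear_combination h2 + huv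
    rcases mul_eq_zero.1 this with h' | h'
    · exact absurd h' hv0
    · exact h'
  -- tan
  have htan : (Real.tan (ω / 2) : ℂ) = Complex.I * (v - u) / (u + v) := by
    rw [Complex.ofReal_tan, Complex.tan_eq_sin_div_cos]
    have hsin : Complex.sin ((ω / 2 : ℝ) : ℂ) = (v - u) * Complex.I / 2 := by
      show (Complex.exp (-((ω / 2 : ℝ) : ℂ) * Complex.I)
        - Complex.exp (((ω / 2 : ℝ) : ℂ) * Complex.I)) * Complex.I / 2 = _
      rw [hu, hv]; push_cast; ring_nf
    have hcos : Complex.cos ((ω / 2 : ℝ) : ℂ) = (u + v) / 2 := by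
      show (Complex.exp (((ω / 2 : ℝ) : ℂ) * Complex.I)
        + Complex.exp (-((ω / 2 : ℝ) : ℂ) * Complex.I)) / 2 = _
      rw [hu, hv]; push_cast; ring_nf
    rw [hsin, hcos]
    field_simp
  -- main computation
  have hgg : (inner ℂ ψ γ : ℂ) * (inner ℂ γ φ : ℂ) = 1 / 2 := by rw [hψγ, hγφ]; exact hr
  rw [weak, hP]
  simp only [imv_add, imv_smul, imv_sub, imv_one, imv_proj]
  have hIt : Complex.I * (a:ℂ) * (Real.tan (ω / 2) : ℂ) = (a:ℂ) * (u - v) / (u + v) := by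
    rw [htan]
    field_simp
    linear_combination (a:ℂ) * (v - u) * Complex.I_sq
  rw [hgg, hψφ, hφφ, hψψ, hIt]
  have hd : ((1 : ℂ) + v * v) / 2 ≠ 0 := by rw [← hψφ]; exact hc0
  have hd2 : ((1 : ℂ) + v * v) ≠ 0 := by
    intro h; exact hd (by rw [h]; norm_num)
  field_simp [show (1:ℂ) + v ^ 2 ≠ 0 by rw [sq]; exact hd2]
  ring_nf
  linear_combination (-2 * (a:ℂ) * v) * huv
end
end

section
/- For any two unit vectors φ and ψ in ℂ², there exists a unit vector γ in ℂ² that is mutually unbiased to both, i.e. |⟨γ, φ⟩|² = 1/2 and |⟨γ, ψ⟩|² = 1/2. -/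
open Complex

/-- for any two unit vectors `φ, ψ` in `ℂ²` there is a unit vector `γ`
mutually unbiased to both: `|⟨γ,φ⟩|² = 1/2` and `|⟨γ,ψ⟩|² = 1/2`. -/
theorem stmt7 (φ ψ : EuclideanSpace ℂ (Fin 2)) (hφ : ‖φ‖ = 1) (hψ : ‖ψ‖ = 1) :
    ∃ γ : EuclideanSpace ℂ (Fin 2), ‖γ‖ = 1 ∧
      (‖(inner ℂ γ φ : ℂ)‖) ^ 2 = 1 / 2 ∧
      (‖(inner ℂ γ ψ : ℂ)‖) ^ 2 = 1 / 2 := by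
  classical
  set a := φ 0 with ha
  set b := φ 1 with hb
  set p := ψ 0 with hp
  set q := ψ 1 with hq
  -- norm conditions as normSq sums
  have norm_sq : ∀ x : EuclideanSpace ℂ (Fin 2), ‖x‖ = 1 →
      normSq (x 0) + normSq (x 1) = 1 := by
    intro x hx
    rw [EuclideanSpace.norm_eq, Real.sqrt_eq_one, Fin.sum_univ_two] at hx
    simpa [Complex.normSq_eq_norm_sq] using hx
  have hφ2 : normSq a + normSq b = 1 := norm_sq φ hφ
  have hψ2 : normSq p + normSq q = 1 := norm_sq ψ hψ
  set c : ℂ := (starRingEnd ℂ) a * p + (starRingEnd ℂ) b * q with hc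
  set d : ℂ := -b * p + a * q with hd
  have hcd : normSq c + normSq d = 1 := by
    have : normSq c + normSq d = (normSq a + normSq b) * (normSq p + normSq q) := by
      simp only [hc, hd, Complex.normSq_apply, Complex.add_re, Complex.add_im,
        Complex.mul_re, Complex.mul_im, Complex.conj_re, Complex.conj_im,
        Complex.neg_re, Complex.neg_im]
      ring
    rw [this, hφ2, hψ2, one_mul]
  set u : ℂ := if c = 0 then 1 else c / (‖c‖ : ℂ) with hu
  set v : ℂ := -I * (if d = 0 then 1 else d / (‖d‖ : ℂ)) with hv
  have hnu : normSq u = 1 := by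
    rw [hu]; split_ifs with h
    · simp
    · rw [normSq_div]
      simp [Complex.normSq_eq_norm_sq, h]
  have hnv : normSq v = 1 := by
    rw [hv, normSq_mul]
    split_ifs with h
    · simp
    · rw [normSq_div]
      simp [Complex.normSq_eq_norm_sq, h]
  have huc : (starRingEnd ℂ) u * c = (‖c‖ : ℂ) := by
    rw [hu]; split_ifs with h
    · simp [h]
    · have habs : (‖c‖ : ℂ) ≠ 0 := by
        simpa using h
      rw [map_div₀, Complex.conj_ofReal, div_mul_eq_mul_div, mul_comm,
        Complex.mul_conj, Complex.normSq_eq_norm_sq]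
      push_cast
      rw [sq, mul_div_assoc, div_self habs, mul_one]
  have hvd : (starRingEnd ℂ) v * d = I * (‖d‖ : ℂ) := by
    rw [hv]; split_ifs with h
    · simp [h]
    · have habs : (‖d‖ : ℂ) ≠ 0 := by
        simpa using h
      rw [map_mul, map_div₀, Complex.conj_ofReal]
      simp only [map_neg, Complex.conj_I, neg_neg]
      rw [mul_assoc, div_mul_eq_mul_div, mul_comm ((starRingEnd ℂ) d) d,
        Complex.mul_conj, Complex.normSq_eq_norm_sq]
      push_cast
      rw [sq, mul_div_assoc, div_self habs, mul_one]
  set s : ℂ := Complex.ofReal ((Real.sqrt 2)⁻¹) with hs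
  set γ : EuclideanSpace ℂ (Fin 2) :=
    (WithLp.equiv 2 (Fin 2 → ℂ)).symm ![s * (u * a + v * (-(starRingEnd ℂ) b)),
      s * (u * b + v * (starRingEnd ℂ) a)] with hγ
  have hγ0 : γ 0 = s * (u * a + v * (-(starRingEnd ℂ) b)) := rfl
  have hγ1 : γ 1 = s * (u * b + v * (starRingEnd ℂ) a) := rfl
  have hs2 : normSq s = 1 / 2 := by
    rw [hs, Complex.normSq_ofReal]
    rw [← Real.sqrt_inv]
    rw [Real.mul_self_sqrt (by norm_num)]
    norm_num
  refine ⟨γ, ?_, ?_, ?_⟩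
  · rw [EuclideanSpace.norm_eq, Real.sqrt_eq_one, Fin.sum_univ_two]
    have key : normSq (u * a + v * (-(starRingEnd ℂ) b)) + normSq (u * b + v * (starRingEnd ℂ) a)
        = (normSq u + normSq v) * (normSq a + normSq b) := by
      simp only [Complex.normSq_apply, Complex.add_re, Complex.add_im,
        Complex.mul_re, Complex.mul_im, Complex.conj_re, Complex.conj_im,
        Complex.neg_re, Complex.neg_im]
      ring
    have : ‖γ 0‖ ^ 2 + ‖γ 1‖ ^ 2
        = normSq s * (normSq (u * a + v * (-(starRingEnd ℂ) b)) + normSq (u * b + v * (starRingEnd ℂ) a)) := by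
      rw [hγ0, hγ1]
      simp only [Complex.sq_norm, Complex.normSq_mul]
      ring
    rw [this, key, hnu, hnv, hφ2, hs2]
    norm_num
  · have hinner : (inner ℂ γ φ : ℂ) = s * ((starRingEnd ℂ) u * ((normSq a : ℂ) + (normSq b : ℂ))) := by
      simp only [PiLp.inner_apply, RCLike.inner_apply', Fin.sum_univ_two, hγ0, hγ1, ← ha, ← hb]
      rw [← Complex.mul_conj a, ← Complex.mul_conj b]
      simp only [map_mul, map_add, map_neg, Complex.conj_conj, hs, Complex.conj_ofReal]
      ring
    have hab : ((normSq a : ℂ) + (normSq b : ℂ)) = 1 := by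
      rw [← Complex.ofReal_add, hφ2, Complex.ofReal_one]
    rw [hinner, hab, mul_one, norm_mul, mul_pow, Complex.sq_norm, Complex.sq_norm,
      hs2, Complex.normSq_conj, hnu]
    norm_num
  · have hinner : (inner ℂ γ ψ : ℂ) = s * ((starRingEnd ℂ) u * c + (starRingEnd ℂ) v * d) := by
      simp only [PiLp.inner_apply, RCLike.inner_apply', Fin.sum_univ_two, hγ0, hγ1, ← hp, ← hq,
        hc, hd]
      simp only [map_mul, map_add, map_neg, Complex.conj_conj, hs, Complex.conj_ofReal]
      ring
    rw [hinner, huc, hvd, norm_mul]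
    rw [mul_pow, Complex.sq_norm, hs2]
    have : ‖(‖c‖ : ℂ) + I * (‖d‖ : ℂ)‖ ^ 2
        = normSq c + normSq d := by
      rw [Complex.sq_norm, Complex.normSq_apply]
      simp [Complex.normSq_eq_norm_sq]
      ring
    rw [this, hcd]
    norm_num
end

section
/- Let φ and ψ be unit vectors in ℂ² that are linearly independent and satisfy ⟨ψ, φ⟩ ≠ 0. For ε ∈ {+1, −1}, set s = ε/|⟨φ, ψ⟩| and define H^ε := ((1−s)/2)·I + (s/2)·(|φ⟩⟨φ| + |ψ⟩⟨ψ|), where I is the 2×2 identity matrix. Then H^ε is a rank-one orthogonal projection (H^ε is Hermitian, (H^ε)² = H^ε, and Tr(H^ε) = 1), and its weak value is W_{φ,ψ}(H^ε) = (1/2)(1 + ε/|⟨φ, ψ⟩|). -/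
noncomputable section

/-- the operators `H^± = ((1∓1/|⟨φ,ψ⟩|)/2) I + (±1/(2|⟨φ,ψ⟩|))(|φ⟩⟨φ| + |ψ⟩⟨ψ|)`
are rank-one orthogonal projections with weak value `(1/2)(1 ± 1/|⟨φ,ψ⟩|)`. -/
theorem stmt8 (φ ψ : EuclideanSpace ℂ (Fin 2))
    (hφ : ‖φ‖ = 1) (hψ : ‖ψ‖ = 1)
    (hind : LinearIndependent ℂ ![φ, ψ])
    (hno : (inner ℂ ψ φ : ℂ) ≠ 0)
    (ε : ℝ) (hε : ε = 1 ∨ ε = -1)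
    (s : ℝ) (hs : s = ε / ‖(inner ℂ φ ψ : ℂ)‖)
    (H : Matrix (Fin 2) (Fin 2) ℂ)
    (hH : H = (((1 - s) / 2 : ℝ) : ℂ) • (1 : Matrix (Fin 2) (Fin 2) ℂ)
        + ((s / 2 : ℝ) : ℂ) • (proj φ + proj ψ)) :
    H.IsHermitian ∧ H * H = H ∧ H.trace = 1 ∧
      weak φ ψ H = (1 / 2) * (1 + (ε : ℂ) / (‖(inner ℂ φ ψ : ℂ)‖ : ℂ)) := by
  have key : ∀ v : EuclideanSpace ℂ (Fin 2), ‖v‖ = 1 →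
      (starRingEnd ℂ) (v 0) * v 0 + (starRingEnd ℂ) (v 1) * v 1 = 1 := by
    intro v hv
    have h := inner_self_eq_norm_sq_to_K (𝕜 := ℂ) (x := v)
    rw [PiLp.inner_apply, Fin.sum_univ_two, hv] at h
    simpa [Complex.conj_mul'] using h
  have h1 := key φ hφ
  have h2 := key ψ hψ
  have habs : ‖(inner ℂ φ ψ : ℂ)‖ = ‖(inner ℂ ψ φ : ℂ)‖ := by
    rw [← inner_conj_symm φ ψ, Complex.norm_conj]
  have habsne : ‖(inner ℂ φ ψ : ℂ)‖ ≠ 0 := by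
    rw [habs]; exact norm_ne_zero_iff.mpr hno
  have hse : s * ‖(inner ℂ φ ψ : ℂ)‖ = ε := by
    rw [hs, div_mul_cancel₀ _ habsne]
  have hsR : s ^ 2 * ‖(inner ℂ φ ψ : ℂ)‖ ^ 2 = 1 := by
    have : (s * ‖(inner ℂ φ ψ : ℂ)‖) ^ 2 = ε ^ 2 := by rw [hse]
    rcases hε with h | h <;> rw [h] at this <;> nlinarith [this]
  have hip : (inner ℂ φ ψ : ℂ) = (starRingEnd ℂ) (φ 0) * ψ 0 + (starRingEnd ℂ) (φ 1) * ψ 1 := by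
    simp [PiLp.inner_apply, RCLike.inner_apply, Fin.sum_univ_two]; ring
  have hip2 : (inner ℂ ψ φ : ℂ) = (starRingEnd ℂ) (ψ 0) * φ 0 + (starRingEnd ℂ) (ψ 1) * φ 1 := by
    simp [PiLp.inner_apply, RCLike.inner_apply, Fin.sum_univ_two]; ring
  have hs2 : (s : ℂ) ^ 2 * (((starRingEnd ℂ) (φ 0) * ψ 0 + (starRingEnd ℂ) (φ 1) * ψ 1) *
      ((starRingEnd ℂ) (ψ 0) * φ 0 + (starRingEnd ℂ) (ψ 1) * φ 1)) = 1 := by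
    rw [← hip, ← hip2, ← inner_conj_symm φ ψ]
    have hcc : (starRingEnd ℂ) (inner ℂ ψ φ : ℂ) * (inner ℂ ψ φ : ℂ)
        = ((‖(inner ℂ φ ψ : ℂ)‖ : ℂ)) ^ 2 := by
      rw [mul_comm, Complex.mul_conj', habs]
    rw [hcc]
    exact_mod_cast hsR
  subst hH
  refine ⟨?_, ?_, ?_, ?_⟩
  · show Matrix.conjTranspose _ = _
    ext i j
    fin_cases i <;> fin_cases j <;>
      simp [Matrix.conjTranspose_apply, Matrix.one_apply, proj, Complex.conj_ofReal,
        mul_comm, Complex.star_def, map_add, map_mul]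
  · ext i j
    fin_cases i <;> fin_cases j <;>
      · simp only [Matrix.mul_apply, Fin.sum_univ_two, Matrix.add_apply, Matrix.smul_apply,
          Matrix.one_apply, proj, Matrix.of_apply, smul_eq_mul, Complex.star_def,
          Fin.isValue, Matrix.cons_val', Matrix.cons_val_zero, Matrix.cons_val_one,
          Matrix.head_cons, Matrix.empty_val', Matrix.cons_val_fin_one, Matrix.head_fin_const,
          if_true, if_false, one_ne_zero, zero_ne_one, ite_true, ite_false, reduceIte]
        push_cast
        try linear_combination (((-1/2 : ℂ) * (s:ℂ) * (s:ℂ) + (1/4 : ℂ) * ψ 1 * (starRingEnd ℂ) (ψ 1) * (s:ℂ) * (s:ℂ) + (1/2 : ℂ) * ψ 0 * (starRingEnd ℂ) (ψ 0) * (s:ℂ) * (s:ℂ) + (1/4 : ℂ) * φ 0 * (starRingEnd ℂ) (φ 0) * (s:ℂ) * (s:ℂ)) : ℂ) * h1 + (((1/4 : ℂ) * (s:ℂ) * (s:ℂ) + (1/4 : ℂ) * ψ 0 * (starRingEnd ℂ) (ψ 0) * (s:ℂ) * (s:ℂ) + (-1/2 : ℂ) * φ 1 * (starRingEnd ℂ)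 (φ 1) * (s:ℂ) * (s:ℂ) + (-1/4 : ℂ) * φ 0 * (starRingEnd ℂ) (φ 0) * (s:ℂ) * (s:ℂ)) : ℂ) * h2 + (((1/4 : ℂ)) : ℂ) * hs2
        try linear_combination (((1/4 : ℂ) * ψ 0 * (starRingEnd ℂ) (ψ 1) * (s:ℂ) * (s:ℂ) + (1/4 : ℂ) * φ 0 * (starRingEnd ℂ) (φ 1) * (s:ℂ) * (s:ℂ)) : ℂ) * h1 + (((1/4 : ℂ) * ψ 0 * (starRingEnd ℂ) (ψ 1) * (s:ℂ) * (s:ℂ) + (1/4 : ℂ) * φ 0 * (starRingEnd ℂ) (φ 1) * (s:ℂ) * (s:ℂ)) : ℂ) * h2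
        try linear_combination (((1/4 : ℂ) * ψ 1 * (starRingEnd ℂ) (ψ 0) * (s:ℂ) * (s:ℂ) + (1/4 : ℂ) * φ 1 * (starRingEnd ℂ) (φ 0) * (s:ℂ) * (s:ℂ)) : ℂ) * h1 + (((1/4 : ℂ) * ψ 1 * (starRingEnd ℂ) (ψ 0) * (s:ℂ) * (s:ℂ) + (1/4 : ℂ) * φ 1 * (starRingEnd ℂ) (φ 0) * (s:ℂ) * (s:ℂ)) : ℂ) * h2
        try linear_combination (((-1/4 : ℂ) * (s:ℂ) * (s:ℂ) + (1/4 : ℂ) * ψ 1 * (starRingEnd ℂ) (ψ 1) * (s:ℂ) * (s:ℂ) + (1/4 : ℂ) * φ 1 * (starRingEnd ℂ) (φ 1) * (s:ℂ) * (s:ℂ)) : ℂ) * h1 + (((1/4 : ℂ) * ψ 1 * (starRingEnd ℂ) (ψ 1) * (s:ℂ) * (s:ℂ) + (-1/4 : ℂ) * φ 0 * (starRingEnd ℂ) (φ 0) * (s:ℂ) * (s:ℂ)) : ℂ) * h2 + (((1/4 : ℂ)) : ℂ) * hs2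
  · simp only [Matrix.trace, Matrix.diag, Fin.sum_univ_two, Matrix.add_apply, Matrix.smul_apply,
      Matrix.one_apply, proj, Matrix.of_apply, smul_eq_mul, Complex.star_def, if_true, ite_true,
      reduceIte]
    push_cast
    linear_combination ((s:ℂ)/2) * h1 + ((s:ℂ)/2) * h2
  · have hinner : (inner ℂ ψ (mulVecE ((((1 - s) / 2 : ℝ) : ℂ) • (1 : Matrix (Fin 2) (Fin 2) ℂ)
        + ((s / 2 : ℝ) : ℂ) • (proj φ + proj ψ)) φ) : ℂ)
        = (((1 + s) / 2 : ℝ) : ℂ) * (inner ℂ ψ φ : ℂ) := by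
      simp only [mulVecE, Matrix.mulVec, dotProduct, Fin.sum_univ_two,
        PiLp.inner_apply, RCLike.inner_apply, Matrix.add_apply, Matrix.smul_apply,
        Matrix.one_apply, proj, Matrix.of_apply, smul_eq_mul, Complex.star_def,
        WithLp.equiv_symm_apply, WithLp.equiv_apply, WithLp.ofLp_toLp, PiLp.toLp_apply, if_true, if_false,
        one_ne_zero, zero_ne_one, ite_true, ite_false, reduceIte, Fin.isValue]
      push_cast
      linear_combination ((s:ℂ)/2) * ((starRingEnd ℂ) (ψ 0) * φ 0 + (starRingEnd ℂ) (ψ 1) * φ 1) * h1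
        + ((s:ℂ)/2) * ((starRingEnd ℂ) (ψ 0) * φ 0 + (starRingEnd ℂ) (ψ 1) * φ 1) * h2
    rw [weak, hinner, mul_div_assoc, div_self hno, mul_one]
    have hsC : (s : ℂ) = (ε : ℂ) / ((‖(inner ℂ φ ψ : ℂ)‖ : ℝ) : ℂ) := by
      rw [hs]; push_cast; ring
    push_cast [hsC]
    ring
end
end

section
/- Let φ and ψ be unit vectors in ℂ² with ⟨ψ, φ⟩ ≠ 0. Then for every 2×2 complex matrix Q that is a rank-one orthogonal projection (Q Hermitian, Q² = Q, Tr(Q) = 1), the real part of the weak value satisfies |Re(W_{φ,ψ}(Q)) − 1/2| ≤ 1/(2|⟨φ, ψ⟩|). Equivalently, (1/2)(1 − 1/|⟨φ, ψ⟩|) ≤ Re(W_{φ,ψ}(Q)) ≤ (1/2)(1 + 1/|⟨φ, ψ⟩|). -/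
noncomputable section

open Matrix
lemma inner_mulVecE (M : Matrix (Fin 2) (Fin 2) ℂ) (x y : EuclideanSpace ℂ (Fin 2)) :
    (inner ℂ x (mulVecE M y) : ℂ) = inner ℂ (mulVecE Mᴴ x) y := by
  simp [mulVecE, PiLp.inner_apply, Matrix.mulVec, dotProduct, Fin.sum_univ_two,
    Matrix.conjTranspose_apply]
  ring

/-- for any rank-one orthogonal projection `Q`, the real part of the weak
value satisfies `|Re(W_{φ,ψ}(Q)) - 1/2| ≤ 1/(2|⟨φ,ψ⟩|)`. -/
theorem stmt9 (φ ψ : EuclideanSpace ℂ (Fin 2))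
    (hφ : ‖φ‖ = 1) (hψ : ‖ψ‖ = 1) (hno : (inner ℂ ψ φ : ℂ) ≠ 0)
    (Q : Matrix (Fin 2) (Fin 2) ℂ)
    (hQ : Q.IsHermitian) (hidem : Q * Q = Q) (htr : Q.trace = 1) :
    |(weak φ ψ Q).re - 1 / 2| ≤ 1 / (2 * ‖(inner ℂ φ ψ : ℂ)‖) := by
  set R : Matrix (Fin 2) (Fin 2) ℂ := 2 • Q - 1 with hRdef
  have h2R : R = Q + Q - 1 := by rw [hRdef, two_smul]
  have hRherm : Rᴴ = R := by
    rw [h2R]; simp [hQ.eq]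
  have hRR : R * R = 1 := by
    rw [h2R]
    have h4 : (Q + Q - 1) * (Q + Q - 1)
        = Q*Q + Q*Q + Q*Q + Q*Q - Q - Q - Q - Q + 1 := by noncomm_ring
    rw [h4, hidem]; abel
  -- mulVecE of product
  have hmul : ∀ (A B : Matrix (Fin 2) (Fin 2) ℂ) (v : EuclideanSpace ℂ (Fin 2)),
      mulVecE (A * B) v = mulVecE A (mulVecE B v) := by
    intro A B v
    simp only [mulVecE, Equiv.apply_symm_apply, Matrix.mulVec_mulVec]
  have hone : mulVecE 1 φ = φ := by
    simp [mulVecE]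
  -- norm of R φ
  have hinner : (inner ℂ (mulVecE R φ) (mulVecE R φ) : ℂ) = inner ℂ φ φ := by
    rw [inner_mulVecE, hRherm, ← hmul, hRR, hone]
  have hnormR : ‖mulVecE R φ‖ = 1 := by
    have h1 : (inner ℂ φ φ : ℂ) = 1 := by
      rw [inner_self_eq_norm_sq_to_K, hφ]; norm_num
    have h2 := inner_self_eq_norm_sq_to_K (𝕜 := ℂ) (mulVecE R φ)
    rw [hinner, h1] at h2
    have h3 : ‖mulVecE R φ‖^2 = 1 := by
      have h4 : ((‖mulVecE R φ‖^2 : ℝ) : ℂ) = ((1:ℝ) : ℂ) := by push_cast; exact h2.symm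
      exact_mod_cast h4
    nlinarith [norm_nonneg (mulVecE R φ)]
  -- Cauchy Schwarz
  have hCS : ‖(inner ℂ ψ (mulVecE R φ) : ℂ)‖ ≤ 1 := by
    calc ‖(inner ℂ ψ (mulVecE R φ) : ℂ)‖ = ‖(inner ℂ ψ (mulVecE R φ) : ℂ)‖ := rfl
    _ ≤ ‖ψ‖ * ‖mulVecE R φ‖ := norm_inner_le_norm _ _
    _ = 1 := by rw [hψ, hnormR]; ring
  -- weak value identity
  have hRφ : mulVecE R φ = mulVecE Q φ + mulVecE Q φ - φ := by
    simp only [h2R, mulVecE]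
    ext i
    fin_cases i <;> simp [Matrix.sub_mulVec, Matrix.add_mulVec, Matrix.one_mulVec, vecHead, vecTail]
  have hW : weak φ ψ Q - 1/2 = (inner ℂ ψ (mulVecE R φ) : ℂ) / (2 * inner ℂ ψ φ) := by
    rw [hRφ, inner_sub_right, inner_add_right]
    unfold weak
    set a := (inner ℂ ψ (mulVecE Q φ) : ℂ)
    set b := (inner ℂ ψ φ : ℂ)
    field_simp
    ring
  have habs : ‖(inner ℂ φ ψ : ℂ)‖ = ‖(inner ℂ ψ φ : ℂ)‖ := by
    have h : (inner ℂ φ ψ : ℂ) = starRingEnd ℂ (inner ℂ ψ φ : ℂ) := (inner_conj_symm _ _).symm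
    rw [h, Complex.norm_conj]
  have hpos : 0 < ‖(inner ℂ ψ φ : ℂ)‖ := by
    simpa using hno
  calc |(weak φ ψ Q).re - 1/2|
      = |(weak φ ψ Q - 1/2).re| := by norm_num [Complex.sub_re]
    _ ≤ ‖weak φ ψ Q - 1/2‖ := Complex.abs_re_le_norm _
    _ = ‖(inner ℂ ψ (mulVecE R φ) : ℂ)‖ / (2 * ‖(inner ℂ ψ φ : ℂ)‖) := by
        rw [hW, norm_div, norm_mul, Complex.norm_two]
    _ ≤ 1 / (2 * ‖(inner ℂ ψ φ : ℂ)‖) := by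
        apply div_le_div_of_nonneg_right hCS <;> positivity
    _ = 1 / (2 * ‖(inner ℂ φ ψ : ℂ)‖) := by rw [habs]
end
end

section
/- Let γ and γ⊥ be orthonormal vectors in ℂ², let θ, α ∈ ℝ with ω := α − θ satisfying e^{iω} ≠ −1, and set φ = (γ + e^{iθ}γ⊥)/√2 and ψ = (γ + e^{iα}γ⊥)/√2. Then: (i) for every 2×2 complex matrix Q that is a rank-one orthogonal projection (Q Hermitian, Q² = Q, Tr(Q) = 1), |Im(W_{φ,ψ}(Q))| ≤ (1/2)|tan(ω/2)|; (ii) this bound is attained with Im(W_{φ,ψ}(|γ⟩⟨γ|)) = (1/2)tan(ω/2) and Im(W_{φ,ψ}(|γ⊥⟩⟨γ⊥|)) = −(1/2)tan(ω/2). -/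
noncomputable section

open Complex Matrix

lemma expP' (x : ℝ) : Complex.exp (x*I) = (Real.cos x : ℂ) + (Real.sin x : ℂ)*I := by
  rw [Complex.exp_mul_I, Complex.ofReal_cos, Complex.ofReal_sin]

lemma expN' (x : ℝ) : Complex.exp (-(x:ℂ)*I) = (Real.cos x : ℂ) - (Real.sin x : ℂ)*I := by
  rw [show (-(x:ℂ)) = ((-x : ℝ) : ℂ) by push_cast; ring, expP', Real.cos_neg, Real.sin_neg]
  push_cast; ring

lemma wv_key (θ α ω : ℝ) (hω : ω = α - θ) (hcos : Real.cos (ω/2) ≠ 0)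
    (a : ℝ) (B n d : ℂ)
    (hn : n = (a:ℂ) + Complex.exp ((θ:ℂ)*I)*B + Complex.exp (-(α:ℂ)*I)*((starRingEnd ℂ) B)
        + Complex.exp (-(ω:ℂ)*I)*(1-(a:ℂ)))
    (hd : d = 1 + Complex.exp (-(ω:ℂ)*I)) :
    (n/d).im = (a - 1/2) * Real.tan (ω/2) := by
  set s : ℝ := ω/2 with hs
  set u : ℝ := (α+θ)/2 with hu
  set e : ℂ := Complex.exp (-(s:ℂ)*I) with he
  have hes : Complex.exp ((s:ℂ)*I) * e = 1 := by
    rw [he, ← Complex.exp_add, ← Complex.exp_zero]; congr 1; ring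
  have h1 : Complex.exp ((θ:ℂ)*I) = e * Complex.exp ((u:ℂ)*I) := by
    rw [he, ← Complex.exp_add]; congr 1; rw [hs, hu, hω]; push_cast; ring
  have h2 : Complex.exp (-(α:ℂ)*I) = e * Complex.exp (-(u:ℂ)*I) := by
    rw [he, ← Complex.exp_add]; congr 1; rw [hs, hu, hω]; push_cast; ring
  have h3 : Complex.exp (-(ω:ℂ)*I) = e * e := by
    rw [he, ← Complex.exp_add]; congr 1; rw [hs]; push_cast; ring
  set m : ℂ := (a:ℂ)*Complex.exp ((s:ℂ)*I) + (Complex.exp ((u:ℂ)*I)*B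
      + Complex.exp (-(u:ℂ)*I)*((starRingEnd ℂ) B)) + Complex.exp (-(s:ℂ)*I)*(1-(a:ℂ)) with hm
  have hn2 : n = e * m := by
    rw [hn, h1, h2, h3, hm, ← he]; linear_combination (-(a:ℂ)) * hes
  have hd2 : d = e * (2*(Real.cos s : ℂ)) := by
    have hcos2 : Complex.exp ((s:ℂ)*I) + Complex.exp (-(s:ℂ)*I) = 2*(Real.cos s : ℂ) := by
      rw [Complex.ofReal_cos, Complex.cos]; ring
    rw [hd, h3]; linear_combination e*hcos2 - hes
  have he0 : e ≠ 0 := Complex.exp_ne_zero _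
  have hmid : (Complex.exp ((u:ℂ)*I)*B + Complex.exp (-(u:ℂ)*I)*((starRingEnd ℂ) B)).im = 0 := by
    have : Complex.exp (-(u:ℂ)*I)*((starRingEnd ℂ) B) = (starRingEnd ℂ) (Complex.exp ((u:ℂ)*I)*B) := by
      rw [_root_.map_mul, ← Complex.exp_conj]; congr 2; simp [Complex.conj_ofReal]
    rw [this, Complex.add_conj]; simp
  have hmim : m.im = (a - 1/2) * (2 * Real.sin s) := by
    rw [hm, expP' s, expN' s]
    simp only [Complex.add_im, hmid, Complex.mul_im, Complex.sub_im, Complex.sub_re,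
      Complex.add_re, Complex.ofReal_re, Complex.ofReal_im, Complex.mul_re, Complex.one_re,
      Complex.one_im, Complex.I_re, Complex.I_im]
    ring
  rw [hn2, hd2, mul_div_mul_left _ _ he0,
    show (2*(Real.cos s : ℂ)) = ((2*Real.cos s : ℝ) : ℂ) by push_cast; ring,
    Complex.div_ofReal_im, hmim, Real.tan_eq_sin_div_cos]
  field_simp

lemma complete2 (g p : EuclideanSpace ℂ (Fin 2))
    (hg : (starRingEnd ℂ) (g 0) * g 0 + (starRingEnd ℂ) (g 1) * g 1 = 1)
    (hp : (starRingEnd ℂ) (p 0) * p 0 + (starRingEnd ℂ) (p 1) * p 1 = 1)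
    (ho : (starRingEnd ℂ) (g 0) * p 0 + (starRingEnd ℂ) (g 1) * p 1 = 0) :
    ∀ i j : Fin 2, g i * (starRingEnd ℂ) (g j) + p i * (starRingEnd ℂ) (p j)
      = if i = j then 1 else 0 := by
  have ho' : (starRingEnd ℂ) (p 0) * g 0 + (starRingEnd ℂ) (p 1) * g 1 = 0 := by
    have := congrArg (starRingEnd ℂ) ho
    simpa [_root_.map_add, _root_.map_mul, mul_comm] using this
  have hUU : (!![g 0, p 0; g 1, p 1] : Matrix (Fin 2) (Fin 2) ℂ)ᴴ * !![g 0, p 0; g 1, p 1] = 1 := by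
    ext i j
    fin_cases i <;> fin_cases j <;>
      simp [Matrix.mul_apply, Fin.sum_univ_two, Matrix.conjTranspose_apply, Matrix.one_apply]
    · linear_combination hg
    · linear_combination ho
    · linear_combination ho'
    · linear_combination hp
  have hUU' : (!![g 0, p 0; g 1, p 1] : Matrix (Fin 2) (Fin 2) ℂ) * !![g 0, p 0; g 1, p 1]ᴴ = 1 :=
    mul_eq_one_comm.mp hUU
  intro i j
  have := congrFun (congrFun hUU' i) j
  fin_cases i <;> fin_cases j <;>
    simpa [Matrix.mul_apply, Fin.sum_univ_two, Matrix.conjTranspose_apply, Matrix.one_apply]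
      using this

lemma ip2 (x y : EuclideanSpace ℂ (Fin 2)) :
    (inner ℂ x y : ℂ) = (starRingEnd ℂ) (x 0) * y 0 + (starRingEnd ℂ) (x 1) * y 1 := by
  simp [PiLp.inner_apply, Fin.sum_univ_two, RCLike.inner_apply, mul_comm]

lemma mv2 (M : Matrix (Fin 2) (Fin 2) ℂ) (v : EuclideanSpace ℂ (Fin 2)) (i : Fin 2) :
    mulVecE M v i = M i 0 * v 0 + M i 1 * v 1 := by
  simp [mulVecE, Matrix.mulVec, dotProduct, Fin.sum_univ_two]
  fin_cases i <;> simp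

lemma nsq' (w : ℂ) : (starRingEnd ℂ) w * w = ((Complex.normSq w : ℝ) : ℂ) := by
  rw [mul_comm]; exact Complex.mul_conj w

/-- the imaginary part of the weak value of any rank-one projection is
bounded by `(1/2)|tan(ω/2)|`, and the bound is attained at `|γ⟩⟨γ|` and `|γ⊥⟩⟨γ⊥|`. -/
theorem stmt10 (γ γperp : EuclideanSpace ℂ (Fin 2))
    (hγ : ‖γ‖ = 1) (hγp : ‖γperp‖ = 1) (horth : (inner ℂ γ γperp : ℂ) = 0)
    (θ α : ℝ) (ω : ℝ) (hω : ω = α - θ)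
    (hnon : Complex.exp (ω * Complex.I) ≠ -1)
    (φ ψ : EuclideanSpace ℂ (Fin 2))
    (hφ : φ = (Real.sqrt 2 : ℂ)⁻¹ • (γ + Complex.exp (θ * Complex.I) • γperp))
    (hψ : ψ = (Real.sqrt 2 : ℂ)⁻¹ • (γ + Complex.exp (α * Complex.I) • γperp)) :
    (∀ Q : Matrix (Fin 2) (Fin 2) ℂ, Q.IsHermitian → Q * Q = Q → Q.trace = 1 →
        |(weak φ ψ Q).im| ≤ (1 / 2) * |Real.tan (ω / 2)|) ∧
      (weak φ ψ (proj γ)).im = (1 / 2) * Real.tan (ω / 2) ∧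
      (weak φ ψ (proj γperp)).im = -((1 / 2) * Real.tan (ω / 2)) := by
  -- scalar abbreviations
  set c : ℂ := (Real.sqrt 2 : ℂ)⁻¹ with hc
  -- basic scalar facts
  have hKc : (starRingEnd ℂ) c = c := by rw [hc]; simp [Complex.conj_ofReal]
  have hcc0 : c * c ≠ 0 := by
    rw [hc]
    simp [Real.sqrt_eq_zero']
  have heα : (starRingEnd ℂ) (Complex.exp ((α:ℂ)*I)) = Complex.exp (-(α:ℂ)*I) := by
    rw [← Complex.exp_conj]; congr 1; simp
  have hωe : Complex.exp (-(ω:ℂ)*I) = Complex.exp (-(α:ℂ)*I) * Complex.exp ((θ:ℂ)*I) := by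
    rw [← Complex.exp_add]; congr 1; rw [hω]; push_cast; ring
  have hcosne : Real.cos (ω/2) ≠ 0 := by
    intro h
    apply hnon
    have h1 : Real.cos ω = -1 := by
      have := Real.cos_two_mul (ω/2)
      rw [show 2*(ω/2) = ω by ring, h] at this
      simpa using this
    have h2 : Real.sin ω = 0 := by
      have := Real.sin_two_mul (ω/2)
      rw [show 2*(ω/2) = ω by ring, h] at this
      simpa using this
    rw [Complex.exp_mul_I, ← Complex.ofReal_cos, ← Complex.ofReal_sin, h1, h2]
    norm_num
  -- orthonormality in coordinates
  have hg : (starRingEnd ℂ) (γ 0) * γ 0 + (starRingEnd ℂ) (γ 1) * γ 1 = 1 := by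
    have h := ip2 γ γ
    rw [inner_self_eq_norm_sq_to_K, hγ] at h
    rw [← h]; norm_num
  have hp : (starRingEnd ℂ) (γperp 0) * γperp 0 + (starRingEnd ℂ) (γperp 1) * γperp 1 = 1 := by
    have h := ip2 γperp γperp
    rw [inner_self_eq_norm_sq_to_K, hγp] at h
    rw [← h]; norm_num
  have ho : (starRingEnd ℂ) (γ 0) * γperp 0 + (starRingEnd ℂ) (γ 1) * γperp 1 = 0 := by
    rw [← ip2]; exact horth
  have ho' : (starRingEnd ℂ) (γperp 0) * γ 0 + (starRingEnd ℂ) (γperp 1) * γ 1 = 0 := by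
    have := congrArg (starRingEnd ℂ) ho
    simpa [_root_.map_add, _root_.map_mul, mul_comm] using this
  have comp := complete2 γ γperp hg hp ho
  have c00 : γ 0 * (starRingEnd ℂ) (γ 0) + γperp 0 * (starRingEnd ℂ) (γperp 0) = 1 := by
    simpa using comp 0 0
  have c11 : γ 1 * (starRingEnd ℂ) (γ 1) + γperp 1 * (starRingEnd ℂ) (γperp 1) = 1 := by
    simpa using comp 1 1
  have c01 : γ 0 * (starRingEnd ℂ) (γ 1) + γperp 0 * (starRingEnd ℂ) (γperp 1) = 0 := by
    simpa using comp 0 1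
  have c10 : γ 1 * (starRingEnd ℂ) (γ 0) + γperp 1 * (starRingEnd ℂ) (γperp 0) = 0 := by
    simpa using comp 1 0
  -- components of φ and ψ
  have hφ0 : φ 0 = c * (γ 0 + Complex.exp ((θ:ℂ)*I) * γperp 0) := by rw [hφ]; simp; ring
  have hφ1 : φ 1 = c * (γ 1 + Complex.exp ((θ:ℂ)*I) * γperp 1) := by rw [hφ]; simp; ring
  have hψ0 : ψ 0 = c * (γ 0 + Complex.exp ((α:ℂ)*I) * γperp 0) := by rw [hψ]; simp; ring
  have hψ1 : ψ 1 = c * (γ 1 + Complex.exp ((α:ℂ)*I) * γperp 1) := by rw [hψ]; simp; ring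
  -- the master computation
  have main : ∀ Q : Matrix (Fin 2) (Fin 2) ℂ, Q.IsHermitian → Q * Q = Q → Q.trace = 1 →
      ∃ a : ℝ, 0 ≤ a ∧ a ≤ 1 ∧ (inner ℂ γ (mulVecE Q γ) : ℂ) = (a:ℂ) ∧
        (weak φ ψ Q).im = (a - 1/2) * Real.tan (ω/2) := by
    intro Q hH hQ2 htrQ
    have hH' : ∀ i j : Fin 2, (starRingEnd ℂ) (Q i j) = Q j i := by
      intro i j
      have := congrFun (congrFun hH j) i
      rw [Matrix.conjTranspose_apply] at this
      exact this
    have hq : ∀ i j : Fin 2, Q i 0 * Q 0 j + Q i 1 * Q 1 j = Q i j := by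
      intro i j
      simpa [Matrix.mul_apply, Fin.sum_univ_two] using congrFun (congrFun hQ2 i) j
    have htr : Q 0 0 + Q 1 1 = 1 := by simpa [Matrix.trace_fin_two] using htrQ
    obtain ⟨A, hAdef⟩ : ∃ x : ℂ, x = (starRingEnd ℂ) (γ 0) * (Q 0 0 * γ 0 + Q 0 1 * γ 1)
        + (starRingEnd ℂ) (γ 1) * (Q 1 0 * γ 0 + Q 1 1 * γ 1) := ⟨_, rfl⟩
    obtain ⟨B, hBdef⟩ : ∃ x : ℂ, x = (starRingEnd ℂ) (γ 0) * (Q 0 0 * γperp 0 + Q 0 1 * γperp 1)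
        + (starRingEnd ℂ) (γ 1) * (Q 1 0 * γperp 0 + Q 1 1 * γperp 1) := ⟨_, rfl⟩
    obtain ⟨D, hDdef⟩ : ∃ x : ℂ, x = (starRingEnd ℂ) (γperp 0) * (Q 0 0 * γperp 0 + Q 0 1 * γperp 1)
        + (starRingEnd ℂ) (γperp 1) * (Q 1 0 * γperp 0 + Q 1 1 * γperp 1) := ⟨_, rfl⟩
    -- A is real and nonnegative
    have hAval : A = (((Complex.normSq (Q 0 0 * γ 0 + Q 0 1 * γ 1)
        + Complex.normSq (Q 1 0 * γ 0 + Q 1 1 * γ 1)) : ℝ) : ℂ) := by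
      push_cast
      rw [← nsq', ← nsq', hAdef]
      simp only [_root_.map_add, _root_.map_mul, hH']
      linear_combination (-((starRingEnd ℂ) (γ 0) * γ 0)) * hq 0 0
        - ((starRingEnd ℂ) (γ 0) * γ 1) * hq 0 1
        - ((starRingEnd ℂ) (γ 1) * γ 0) * hq 1 0
        - ((starRingEnd ℂ) (γ 1) * γ 1) * hq 1 1
    have hDval : D = (((Complex.normSq (Q 0 0 * γperp 0 + Q 0 1 * γperp 1)
        + Complex.normSq (Q 1 0 * γperp 0 + Q 1 1 * γperp 1)) : ℝ) : ℂ) := by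
      push_cast
      rw [← nsq', ← nsq', hDdef]
      simp only [_root_.map_add, _root_.map_mul, hH']
      linear_combination (-((starRingEnd ℂ) (γperp 0) * γperp 0)) * hq 0 0
        - ((starRingEnd ℂ) (γperp 0) * γperp 1) * hq 0 1
        - ((starRingEnd ℂ) (γperp 1) * γperp 0) * hq 1 0
        - ((starRingEnd ℂ) (γperp 1) * γperp 1) * hq 1 1
    obtain ⟨a, ha⟩ : ∃ a : ℝ, A = (a:ℂ) := ⟨_, hAval⟩
    obtain ⟨dd, hdd⟩ : ∃ d : ℝ, D = (d:ℂ) := ⟨_, hDval⟩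
    have ha0 : 0 ≤ a := by
      have : (a:ℂ) = _ := ha.symm.trans hAval
      have := Complex.ofReal_inj.mp this
      rw [this]
      exact add_nonneg (Complex.normSq_nonneg _) (Complex.normSq_nonneg _)
    have hd0 : 0 ≤ dd := by
      have : (dd:ℂ) = _ := hdd.symm.trans hDval
      have := Complex.ofReal_inj.mp this
      rw [this]
      exact add_nonneg (Complex.normSq_nonneg _) (Complex.normSq_nonneg _)
    -- A + D = 1
    have hAD : A + D = 1 := by
      rw [hAdef, hDdef]
      linear_combination Q 0 0 * c00 + Q 0 1 * c10 + Q 1 0 * c01 + Q 1 1 * c11 + htr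
    have had : a + dd = 1 := by
      rw [ha, hdd] at hAD
      exact_mod_cast hAD
    have ha1 : a ≤ 1 := by linarith
    -- conj B relation
    have hCB : (starRingEnd ℂ) B = (starRingEnd ℂ) (γperp 0) * (Q 0 0 * γ 0 + Q 0 1 * γ 1)
        + (starRingEnd ℂ) (γperp 1) * (Q 1 0 * γ 0 + Q 1 1 * γ 1) := by
      rw [hBdef]
      simp only [_root_.map_add, _root_.map_mul, Complex.conj_conj, hH']
      ring
    -- numerator and denominator
    have hnum : (inner ℂ ψ (mulVecE Q φ) : ℂ) = (c*c) * (A + Complex.exp ((θ:ℂ)*I)*B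
        + Complex.exp (-(α:ℂ)*I) * ((starRingEnd ℂ) B) + Complex.exp (-(ω:ℂ)*I)*D) := by
      rw [ip2, mv2, mv2, hφ0, hφ1, hψ0, hψ1, hCB, hAdef, hBdef, hDdef, hωe]
      simp only [_root_.map_add, _root_.map_mul, hKc, heα]
      ring
    have hden : (inner ℂ ψ φ : ℂ) = (c*c) * (1 + Complex.exp (-(ω:ℂ)*I)) := by
      rw [ip2, hφ0, hφ1, hψ0, hψ1, hωe]
      simp only [_root_.map_add, _root_.map_mul, hKc, heα]
      linear_combination (c*c)*hg + (c*c*Complex.exp ((θ:ℂ)*I))*ho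
        + (c*c*Complex.exp (-(α:ℂ)*I))*ho'
        + (c*c*Complex.exp (-(α:ℂ)*I)*Complex.exp ((θ:ℂ)*I))*hp
    have hD1 : D = 1 - (a:ℂ) := by rw [← ha]; linear_combination hAD
    have hw : weak φ ψ Q = ((a:ℂ) + Complex.exp ((θ:ℂ)*I)*B
        + Complex.exp (-(α:ℂ)*I) * ((starRingEnd ℂ) B)
        + Complex.exp (-(ω:ℂ)*I)*(1-(a:ℂ))) / (1 + Complex.exp (-(ω:ℂ)*I)) := by
      rw [weak, hnum, hden, hD1, ha, mul_div_mul_left _ _ hcc0]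
    refine ⟨a, ha0, ha1, ?_, ?_⟩
    · rw [ip2, mv2, mv2, ← hAdef, ha]
    · rw [hw]
      exact wv_key θ α ω hω hcosne a B _ _ rfl rfl
  refine ⟨?_, ?_, ?_⟩
  · intro Q h1 h2 h3
    obtain ⟨a, ha0, ha1, _, him⟩ := main Q h1 h2 h3
    rw [him, abs_mul]
    have : |a - 1/2| ≤ 1/2 := by
      rw [abs_le]; constructor <;> linarith
    exact mul_le_mul_of_nonneg_right this (abs_nonneg _)
  · -- proj γ
    have hH : (proj γ).IsHermitian := by
      ext i j
      simp only [proj, Matrix.conjTranspose_apply, Matrix.of_apply, star_mul', star_star]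
      ring
    have h2 : proj γ * proj γ = proj γ := by
      ext i j
      simp only [Matrix.mul_apply, Fin.sum_univ_two, proj, Matrix.of_apply, Complex.star_def]
      linear_combination (γ i * (starRingEnd ℂ) (γ j)) * hg
    have h3 : (proj γ).trace = 1 := by
      rw [Matrix.trace_fin_two]
      simp only [proj, Matrix.of_apply, Complex.star_def]
      linear_combination hg
    obtain ⟨a, _, _, hval, him⟩ := main (proj γ) hH h2 h3
    have hval2 : (inner ℂ γ (mulVecE (proj γ) γ) : ℂ) = 1 := by
      rw [ip2, mv2, mv2]
      simp only [proj, Matrix.of_apply, Complex.star_def]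
      linear_combination ((starRingEnd ℂ) (γ 0) * γ 0 + (starRingEnd ℂ) (γ 1) * γ 1 + 1) * hg
    have : (a:ℂ) = 1 := by rw [← hval, hval2]
    have ha : a = 1 := by exact_mod_cast this
    rw [him, ha]; ring
  · -- proj γperp
    have hH : (proj γperp).IsHermitian := by
      ext i j
      simp only [proj, Matrix.conjTranspose_apply, Matrix.of_apply, star_mul', star_star]
      ring
    have h2 : proj γperp * proj γperp = proj γperp := by
      ext i j
      simp only [Matrix.mul_apply, Fin.sum_univ_two, proj, Matrix.of_apply, Complex.star_def]
      linear_combination (γperp i * (starRingEnd ℂ) (γperp j)) * hp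
    have h3 : (proj γperp).trace = 1 := by
      rw [Matrix.trace_fin_two]
      simp only [proj, Matrix.of_apply, Complex.star_def]
      linear_combination hp
    obtain ⟨a, _, _, hval, him⟩ := main (proj γperp) hH h2 h3
    have hval2 : (inner ℂ γ (mulVecE (proj γperp) γ) : ℂ) = 0 := by
      rw [ip2, mv2, mv2]
      simp only [proj, Matrix.of_apply, Complex.star_def]
      linear_combination ((starRingEnd ℂ) (γperp 0) * γ 0 + (starRingEnd ℂ) (γperp 1) * γ 1) * ho
    have : (a:ℂ) = 0 := by rw [← hval, hval2]
    have ha : a = 0 := by exact_mod_cast this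
    rw [him, ha]; ring
end
end

section
/- Let φ, φ⊥ be orthonormal vectors in ℂ², let ψ be a unit vector mutually unbiased to φ, i.e. |⟨ψ, φ⟩|² = 1/2, let p ∈ [0,1], and set ρ := (1−p)|φ⟩⟨φ| + p|φ⊥⟩⟨φ⊥|. For ε ∈ {+1, −1}, set s = ε√2 (so s = ε/|⟨φ, ψ⟩|) and H^ε := ((1−s)/2)·I + (s/2)·(|φ⟩⟨φ| + |ψ⟩⟨ψ|), where I is the 2×2 identity matrix. Then the generalized weak value satisfies W_{ρ,ψ}(H^ε) = Tr(|ψ⟩⟨ψ| H^ε ρ)/Tr(|ψ⟩⟨ψ|ρ) = (1/2)(1 + ε(1−p)√2). In particular W_{φ⊥,ψ}(H^ε) = 1/2. -/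
noncomputable section

/-- The generalized weak value `W_{ρ,ψ}(M) = Tr(|ψ⟩⟨ψ| M ρ) / Tr(|ψ⟩⟨ψ| ρ)`. -/
def gweak (ρ : Matrix (Fin 2) (Fin 2) ℂ) (ψ : EuclideanSpace ℂ (Fin 2))
    (M : Matrix (Fin 2) (Fin 2) ℂ) : ℂ :=
  (proj ψ * M * ρ).trace / (proj ψ * ρ).trace

lemma inner_expand (u v : EuclideanSpace ℂ (Fin 2)) :
    (inner ℂ u v : ℂ) = star (u 0) * v 0 + star (u 1) * v 1 := by
  rw [PiLp.inner_apply, Fin.sum_univ_two, RCLike.inner_apply, RCLike.inner_apply,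
    starRingEnd_apply, starRingEnd_apply]
  ring

lemma trace_proj_mul (u v : EuclideanSpace ℂ (Fin 2)) :
    (proj u * proj v).trace = (inner ℂ u v : ℂ) * (inner ℂ v u : ℂ) := by
  rw [inner_expand, inner_expand]
  simp [proj, Matrix.trace, Matrix.mul_apply, Matrix.diag, Fin.sum_univ_two]
  ring

lemma trace_proj_mul3 (u v w : EuclideanSpace ℂ (Fin 2)) :
    (proj u * proj v * proj w).trace
      = (inner ℂ u v : ℂ) * (inner ℂ v w : ℂ) * (inner ℂ w u : ℂ) := by
  rw [inner_expand, inner_expand, inner_expand]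
  simp [proj, Matrix.trace, Matrix.mul_apply, Matrix.diag, Fin.sum_univ_two]
  ring

lemma mulVecE_add (M N : Matrix (Fin 2) (Fin 2) ℂ) (v : EuclideanSpace ℂ (Fin 2)) :
    mulVecE (M + N) v = mulVecE M v + mulVecE N v := by
  ext i
  fin_cases i <;> simp [mulVecE, Matrix.add_mulVec]

lemma mulVecE_smul (c : ℂ) (M : Matrix (Fin 2) (Fin 2) ℂ) (v : EuclideanSpace ℂ (Fin 2)) :
    mulVecE (c • M) v = c • mulVecE M v := by
  ext i
  fin_cases i <;> simp [mulVecE, Matrix.smul_mulVec]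

lemma mulVecE_one (v : EuclideanSpace ℂ (Fin 2)) : mulVecE 1 v = v := by
  simp [mulVecE]

lemma mulVecE_proj (u v : EuclideanSpace ℂ (Fin 2)) :
    mulVecE (proj u) v = (inner ℂ u v : ℂ) • u := by
  ext i
  rw [inner_expand]
  fin_cases i <;> simp [mulVecE, proj, Matrix.mulVec, dotProduct, Fin.sum_univ_two] <;> ring

/-- for mutually unbiased `φ, ψ` and depolarized pre-selection `ρ`, the
generalized weak value of `H^ε` (with `s = ε√2`) is `(1/2)(1 + ε(1-p)√2)`; in particular
`W_{φ⊥,ψ}(H^ε) = 1/2`. -/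
theorem stmt13 (φ φperp ψ : EuclideanSpace ℂ (Fin 2))
    (hφ : ‖φ‖ = 1) (hφp : ‖φperp‖ = 1) (horth : (inner ℂ φ φperp : ℂ) = 0)
    (hψ : ‖ψ‖ = 1)
    (hmu : (‖(inner ℂ ψ φ : ℂ)‖) ^ 2 = 1 / 2)
    (p : ℝ) (hp : p ∈ Set.Icc (0 : ℝ) 1)
    (ρ : Matrix (Fin 2) (Fin 2) ℂ)
    (hρ : ρ = ((1 - p : ℝ) : ℂ) • proj φ + ((p : ℝ) : ℂ) • proj φperp)
    (ε : ℝ) (hε : ε = 1 ∨ ε = -1)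
    (s : ℝ) (hs : s = ε * Real.sqrt 2)
    (H : Matrix (Fin 2) (Fin 2) ℂ)
    (hH : H = (((1 - s) / 2 : ℝ) : ℂ) • (1 : Matrix (Fin 2) (Fin 2) ℂ)
        + ((s / 2 : ℝ) : ℂ) • (proj φ + proj ψ)) :
    gweak ρ ψ H = (1 / 2) * (1 + ((ε * (1 - p) * Real.sqrt 2 : ℝ) : ℂ)) ∧
      weak φperp ψ H = 1 / 2 := by
  have hφφ : (inner ℂ φ φ : ℂ) = 1 := by
    rw [inner_self_eq_norm_sq_to_K, hφ]; norm_num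
  have hww : (inner ℂ φperp φperp : ℂ) = 1 := by
    rw [inner_self_eq_norm_sq_to_K, hφp]; norm_num
  have hψψ : (inner ℂ ψ ψ : ℂ) = 1 := by
    rw [inner_self_eq_norm_sq_to_K, hψ]; norm_num
  have hpφ : (inner ℂ φperp φ : ℂ) = 0 := by
    rw [← inner_conj_symm, horth, map_zero]
  have haa : (inner ℂ ψ φ : ℂ) * (inner ℂ φ ψ : ℂ) = 1 / 2 := by
    rw [← inner_conj_symm φ ψ, Complex.mul_conj, ← Complex.sq_norm, hmu]
    norm_num
  -- completeness : proj φ + proj φperp = 1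
  have hU : (Matrix.of fun i j : Fin 2 => star ((![φ, φperp] i) j)) *
      (Matrix.of fun i j : Fin 2 => (![φ, φperp] j) i) = 1 := by
    ext i j
    fin_cases i <;> fin_cases j <;>
      simp [Matrix.mul_apply, Fin.sum_univ_two, Matrix.one_apply] <;>
      simp only [starRingEnd_apply]
    · linear_combination (inner_expand φ φ).symm.trans hφφ
    · linear_combination (inner_expand φ φperp).symm.trans horth
    · linear_combination (inner_expand φperp φ).symm.trans hpφ
    · linear_combination (inner_expand φperp φperp).symm.trans hww
  rw [mul_eq_one_comm] at hU
  have key : proj φ + proj φperp = 1 := by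
    rw [← hU]
    ext i j
    fin_cases i <;> fin_cases j <;>
      simp [proj, Matrix.mul_apply, Fin.sum_univ_two] <;> ring
  have e : ∀ i j, (proj φ + proj φperp) i j = (1 : Matrix (Fin 2) (Fin 2) ℂ) i j := by
    rw [key]; intro i j; rfl
  have e00 : φ 0 * star (φ 0) + φperp 0 * star (φperp 0) = 1 := by
    simpa [proj, Matrix.one_apply] using e 0 0
  have e01 : φ 0 * star (φ 1) + φperp 0 * star (φperp 1) = 0 := by
    simpa [proj, Matrix.one_apply] using e 0 1
  have e10 : φ 1 * star (φ 0) + φperp 1 * star (φperp 0) = 0 := by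
    simpa [proj, Matrix.one_apply] using e 1 0
  have e11 : φ 1 * star (φ 1) + φperp 1 * star (φperp 1) = 1 := by
    simpa [proj, Matrix.one_apply] using e 1 1
  have hbb : (inner ℂ ψ φperp : ℂ) * (inner ℂ φperp ψ : ℂ) = 1 / 2 := by
    have haa' := haa
    have hψψ' := hψψ
    rw [inner_expand, inner_expand] at haa'
    rw [inner_expand] at hψψ'
    rw [inner_expand, inner_expand]
    linear_combination hψψ' - haa' + (star (ψ 0) * ψ 0) * e00 + (star (ψ 0) * ψ 1) * e01 +
      (star (ψ 1) * ψ 0) * e10 + (star (ψ 1) * ψ 1) * e11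
  have hbne : (inner ℂ ψ φperp : ℂ) ≠ 0 := by
    intro h
    rw [h, zero_mul] at hbb
    norm_num at hbb
  constructor
  · have hden : (proj ψ * ρ).trace = 1 / 2 := by
      rw [hρ]
      simp only [Matrix.mul_add, Matrix.mul_smul, Matrix.trace_add, Matrix.trace_smul,
        trace_proj_mul, smul_eq_mul]
      rw [haa, hbb]
      push_cast
      ring
    have hnum : (proj ψ * H * ρ).trace = (1 / 4 : ℂ) * (1 + (s : ℂ) * (1 - (p : ℂ))) := by
      rw [hH, hρ]
      simp only [Matrix.mul_add, Matrix.add_mul, Matrix.mul_smul, Matrix.smul_mul,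
        Matrix.mul_one, Matrix.trace_add, Matrix.trace_smul, trace_proj_mul,
        trace_proj_mul3, smul_eq_mul]
      rw [hφφ, hψψ, horth]
      push_cast
      linear_combination ((((1 - s) / 2 : ℂ) + (s : ℂ)) * (1 - (p : ℂ))) * haa +
        ((((1 - s) / 2 : ℂ) + ((s / 2 : ℂ))) * (p : ℂ)) * hbb
    rw [gweak, hnum, hden, hs]
    push_cast
    field_simp
    ring
  · rw [weak, hH, mulVecE_add, mulVecE_smul, mulVecE_smul, mulVecE_one, mulVecE_add,
      mulVecE_proj, mulVecE_proj, horth]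
    simp only [inner_add_right, inner_smul_right, hψψ, zero_smul, zero_add, mul_one]
    rw [div_eq_iff hbne, hs]
    push_cast
    ring
end
end

section
/- Let γ and γ⊥ be orthonormal vectors in ℂ², let θ ∈ ℝ, and set φ = (γ + e^{iθ}γ⊥)/√2 and ψ = (γ + e^{i(θ+π/2)}γ⊥)/√2 (mutually unbiased pre- and post-selection). Let φ⊥ be a unit vector orthogonal to φ, let p ∈ [0,1), and set ρ := (1−p)|φ⟩⟨φ| + p|φ⊥⟩⟨φ⊥|. Let H^+ := ((1−√2)/2)·I + (√2/2)·(|φ⟩⟨φ| + |ψ⟩⟨ψ|). Then |Re(W_{ρ,ψ}(H^+))| > |Im(W_{ρ,ψ}(|γ⟩⟨γ|))|. -/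
noncomputable section

open Matrix Complex

/-- Rank-one operator `|v⟩⟨w|`. -/
def outer (v w : EuclideanSpace ℂ (Fin 2)) : Matrix (Fin 2) (Fin 2) ℂ :=
  Matrix.of fun i j => v i * star (w j)

lemma proj_eq_outer (v : EuclideanSpace ℂ (Fin 2)) : proj v = outer v v := rfl

lemma outer_mul_outer (a b c d : EuclideanSpace ℂ (Fin 2)) :
    outer a b * outer c d = (inner ℂ b c : ℂ) • outer a d := by
  ext i j
  simp [outer, Matrix.mul_apply, Fin.sum_univ_two, PiLp.inner_apply, RCLike.inner_apply,
    Matrix.smul_apply]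
  ring

lemma trace_outer (a b : EuclideanSpace ℂ (Fin 2)) :
    (outer a b).trace = (inner ℂ b a : ℂ) := by
  simp [outer, Matrix.trace, Matrix.diag, Fin.sum_univ_two, PiLp.inner_apply,
    RCLike.inner_apply]

lemma completeness (u v : EuclideanSpace ℂ (Fin 2)) (hu : (inner ℂ u u : ℂ) = 1)
    (hv : (inner ℂ v v : ℂ) = 1) (huv : (inner ℂ u v : ℂ) = 0) :
    outer u u + outer v v = 1 := by
  have hvu : (inner ℂ v u : ℂ) = 0 := by
    rw [← inner_conj_symm, huv, _root_.map_zero]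
  have hu' : (starRingEnd ℂ) (u 0) * u 0 + (starRingEnd ℂ) (u 1) * u 1 = 1 := by
    have := hu; simp only [PiLp.inner_apply, RCLike.inner_apply, Fin.sum_univ_two] at this
    linear_combination this
  have hv' : (starRingEnd ℂ) (v 0) * v 0 + (starRingEnd ℂ) (v 1) * v 1 = 1 := by
    have := hv; simp only [PiLp.inner_apply, RCLike.inner_apply, Fin.sum_univ_two] at this
    linear_combination this
  have huv' : (starRingEnd ℂ) (u 0) * v 0 + (starRingEnd ℂ) (u 1) * v 1 = 0 := by
    have := huv; simp only [PiLp.inner_apply, RCLike.inner_apply, Fin.sum_univ_two] at this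
    linear_combination this
  have hvu' : (starRingEnd ℂ) (v 0) * u 0 + (starRingEnd ℂ) (v 1) * u 1 = 0 := by
    have := hvu; simp only [PiLp.inner_apply, RCLike.inner_apply, Fin.sum_univ_two] at this
    linear_combination this
  set U : Matrix (Fin 2) (Fin 2) ℂ :=
    Matrix.of fun i j => if j = 0 then u i else v i with hUdef
  have hU : Uᴴ * U = 1 := by
    ext i j
    fin_cases i <;> fin_cases j <;>
      simp [Matrix.mul_apply, Matrix.conjTranspose_apply, Fin.sum_univ_two, hUdef,
        Matrix.one_apply, hu', hv', huv', hvu']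
  have hU2 : U * Uᴴ = 1 := mul_eq_one_comm.mp hU
  have : outer u u + outer v v = U * Uᴴ := by
    ext i j
    simp [Matrix.mul_apply, Matrix.conjTranspose_apply, Fin.sum_univ_two, hUdef, outer]
    try ring
  rw [this, hU2]

lemma inner_combo (x y : EuclideanSpace ℂ (Fin 2)) (a b c d : ℂ)
    (h1 : (inner ℂ x x : ℂ) = 1) (h2 : (inner ℂ y y : ℂ) = 1)
    (h3 : (inner ℂ x y : ℂ) = 0) (h4 : (inner ℂ y x : ℂ) = 0) :
    (inner ℂ (a • x + b • y) (c • x + d • y) : ℂ)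
      = (starRingEnd ℂ) a * c + (starRingEnd ℂ) b * d := by
  simp only [inner_add_left, inner_add_right, inner_smul_left, inner_smul_right, h1, h2, h3, h4]
  ring

set_option maxHeartbeats 2000000 in
/-- for mutually unbiased pre- and post-selection and depolarizing noise of
strength `p ∈ [0,1)`, `|Re(W_{ρ,ψ}(H⁺))| > |Im(W_{ρ,ψ}(|γ⟩⟨γ|))|`. -/
theorem stmt16 (γ γperp : EuclideanSpace ℂ (Fin 2))
    (hγ : ‖γ‖ = 1) (hγp : ‖γperp‖ = 1) (horth : (inner ℂ γ γperp : ℂ) = 0)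
    (θ : ℝ)
    (φ ψ : EuclideanSpace ℂ (Fin 2))
    (hφ : φ = (Real.sqrt 2 : ℂ)⁻¹ • (γ + Complex.exp (θ * Complex.I) • γperp))
    (hψ : ψ = (Real.sqrt 2 : ℂ)⁻¹ •
        (γ + Complex.exp ((θ + Real.pi / 2) * Complex.I) • γperp))
    (φperp : EuclideanSpace ℂ (Fin 2))
    (hφperp : ‖φperp‖ = 1) (horth' : (inner ℂ φ φperp : ℂ) = 0)
    (p : ℝ) (hp : p ∈ Set.Ico (0 : ℝ) 1)
    (ρ : Matrix (Fin 2) (Fin 2) ℂ)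
    (hρ : ρ = ((1 - p : ℝ) : ℂ) • proj φ + ((p : ℝ) : ℂ) • proj φperp)
    (H : Matrix (Fin 2) (Fin 2) ℂ)
    (hH : H = (((1 - Real.sqrt 2) / 2 : ℝ) : ℂ) • (1 : Matrix (Fin 2) (Fin 2) ℂ)
        + ((Real.sqrt 2 / 2 : ℝ) : ℂ) • (proj φ + proj ψ)) :
    |(gweak ρ ψ H).re| > |(gweak ρ ψ (proj γ)).im| := by
  obtain ⟨hp0, hp1⟩ := hp
  -- basic scalars
  set r : ℂ := ((Real.sqrt 2 : ℝ) : ℂ)⁻¹ with hrdef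
  set e : ℂ := Complex.exp ((θ : ℂ) * Complex.I) with hedef
  set f : ℂ := Complex.exp (((θ : ℂ) + (Real.pi : ℂ) / 2) * Complex.I) with hfdef
  have hs2 : (0:ℝ) < Real.sqrt 2 := Real.sqrt_pos.mpr (by norm_num)
  have hsne : ((Real.sqrt 2 : ℝ) : ℂ) ≠ 0 := by exact_mod_cast ne_of_gt hs2
  have hsq : ((Real.sqrt 2 : ℝ) : ℂ) * ((Real.sqrt 2 : ℝ) : ℂ) = 2 := by
    exact_mod_cast Real.mul_self_sqrt (by norm_num : (0:ℝ) ≤ 2)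
  have hrr : r * r = 1/2 := by
    rw [hrdef, ← mul_inv]
    rw [hsq]
    norm_num
  have hcr : (starRingEnd ℂ) r = r := by
    rw [hrdef, _root_.map_inv₀, Complex.conj_ofReal]
  have hee : (starRingEnd ℂ) e * e = 1 := by
    rw [hedef, ← Complex.exp_conj, ← Complex.exp_add]
    have : (starRingEnd ℂ) ((θ : ℂ) * Complex.I) + (θ : ℂ) * Complex.I = 0 := by
      simp [_root_.map_mul, Complex.conj_ofReal, Complex.conj_I]
      try ring
    rw [this, Complex.exp_zero]
  have hff : (starRingEnd ℂ) f * f = 1 := by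
    rw [hfdef, ← Complex.exp_conj, ← Complex.exp_add]
    have : (starRingEnd ℂ) (((θ : ℂ) + (Real.pi : ℂ)/2) * Complex.I)
        + ((θ : ℂ) + (Real.pi : ℂ)/2) * Complex.I = 0 := by
      simp [_root_.map_mul, _root_.map_add, _root_.map_div₀, _root_.map_ofNat, Complex.conj_ofReal, Complex.conj_I]
      try ring
    rw [this, Complex.exp_zero]
  have hfe : (starRingEnd ℂ) f * e = -Complex.I := by
    rw [hfdef, hedef, ← Complex.exp_conj, ← Complex.exp_add]
    have : (starRingEnd ℂ) (((θ : ℂ) + (Real.pi : ℂ)/2) * Complex.I) + (θ : ℂ) * Complex.I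
        = ((-(Real.pi/2) : ℝ) : ℂ) * Complex.I := by
      simp [_root_.map_mul, _root_.map_add, _root_.map_div₀, _root_.map_ofNat, Complex.conj_ofReal, Complex.conj_I]
      push_cast
      ring
    rw [this, Complex.exp_mul_I, ← Complex.ofReal_cos, ← Complex.ofReal_sin]
    simp [Real.cos_pi_div_two, Real.sin_pi_div_two]
  have hef : (starRingEnd ℂ) e * f = Complex.I := by
    have := congrArg (starRingEnd ℂ) hfe
    simpa [_root_.map_mul, Complex.conj_conj, Complex.conj_I, mul_comm] using this
  -- inner products among γ, γperp
  have hγγ : (inner ℂ γ γ : ℂ) = 1 := by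
    rw [inner_self_eq_norm_sq_to_K, hγ]; norm_num
  have hγpγp : (inner ℂ γperp γperp : ℂ) = 1 := by
    rw [inner_self_eq_norm_sq_to_K, hγp]; norm_num
  have hγpγ : (inner ℂ γperp γ : ℂ) = 0 := by
    rw [← inner_conj_symm, horth, _root_.map_zero]
  -- rewrite φ ψ as combos
  have hφ' : φ = r • γ + (r * e) • γperp := by
    rw [hφ, smul_add, smul_smul]
  have hψ' : ψ = r • γ + (r * f) • γperp := by
    rw [hψ, smul_add, smul_smul]
  have hγ' : γ = (1:ℂ) • γ + (0:ℂ) • γperp := by simp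
  -- inner products
  have hψφ : (inner ℂ ψ φ : ℂ) = (1 - Complex.I) / 2 := by
    rw [hψ', hφ', inner_combo γ γperp _ _ _ _ hγγ hγpγp horth hγpγ]
    rw [_root_.map_mul, hcr]
    have : r * r + r * (starRingEnd ℂ) f * (r * e) = r * r * (1 + (starRingEnd ℂ) f * e) := by
      ring
    rw [this, hfe, hrr]
    ring
  have hφψ : (inner ℂ φ ψ : ℂ) = (1 + Complex.I) / 2 := by
    rw [← inner_conj_symm, hψφ]
    simp [_root_.map_sub, _root_.map_div₀, _root_.map_ofNat, Complex.conj_I]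
    try ring
  have hψψ : (inner ℂ ψ ψ : ℂ) = 1 := by
    rw [hψ', inner_combo γ γperp _ _ _ _ hγγ hγpγp horth hγpγ]
    rw [_root_.map_mul, hcr]
    have : r * r + r * (starRingEnd ℂ) f * (r * f) = r * r * (1 + (starRingEnd ℂ) f * f) := by
      ring
    rw [this, hff, hrr]
    ring
  have hφφ : (inner ℂ φ φ : ℂ) = 1 := by
    rw [hφ', inner_combo γ γperp _ _ _ _ hγγ hγpγp horth hγpγ]
    rw [_root_.map_mul, hcr]
    have : r * r + r * (starRingEnd ℂ) e * (r * e) = r * r * (1 + (starRingEnd ℂ) e * e) := by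
      ring
    rw [this, hee, hrr]
    ring
  have hγψ : (inner ℂ γ ψ : ℂ) = r := by
    simp [hψ', inner_add_right, inner_smul_right, hγγ, horth, hγ]
  have hψγ : (inner ℂ ψ γ : ℂ) = r := by
    rw [← inner_conj_symm, hγψ, hcr]
  have hγφ : (inner ℂ γ φ : ℂ) = r := by
    simp [hφ', inner_add_right, inner_smul_right, hγγ, horth, hγ]
  -- φperp facts
  have hφpφp : (inner ℂ φperp φperp : ℂ) = 1 := by
    rw [inner_self_eq_norm_sq_to_K, hφperp]; norm_num
  have hProjSum : outer φ φ + outer φperp φperp = 1 :=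
    completeness φ φperp hφφ hφpφp horth'
  have hφperpEq : proj φperp = 1 - proj φ := by
    rw [proj_eq_outer, proj_eq_outer, ← hProjSum]
    abel
  have hρ' : ρ = (p : ℂ) • (1 : Matrix (Fin 2) (Fin 2) ℂ) + ((1 : ℂ) - 2*p) • proj φ := by
    rw [hρ, hφperpEq]
    push_cast
    module
  -- denominator
  have hD : (proj ψ * ρ).trace = 1/2 := by
    rw [hρ']
    simp only [proj_eq_outer]
    simp only [Matrix.mul_add, mul_smul_comm, Matrix.mul_one, outer_mul_outer,
      Matrix.trace_add, Matrix.trace_smul, trace_outer, smul_eq_mul, smul_smul]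
    rw [hψψ, hψφ, hφψ]
    linear_combination ((2*(p:ℂ)-1)/4) * Complex.I_sq
  -- numerator for H
  have hNH : (proj ψ * H * ρ).trace
      = (((1 - Real.sqrt 2)/2 : ℝ) : ℂ)/2
        + ((Real.sqrt 2/2 : ℝ) : ℂ) * (2 - (p:ℂ))/2 := by
    rw [hρ', hH]
    simp only [proj_eq_outer]
    simp only [Matrix.mul_add, Matrix.add_mul, mul_smul_comm, smul_mul_assoc,
      Matrix.mul_one, Matrix.one_mul, outer_mul_outer, smul_smul,
      Matrix.trace_add, Matrix.trace_smul, trace_outer, Matrix.trace_one, smul_eq_mul]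
    rw [hψψ, hψφ, hφψ, hφφ]
    push_cast
    linear_combination ((p:ℂ)/4 + (p:ℂ)*((Real.sqrt 2:ℝ):ℂ)/8
      - ((Real.sqrt 2:ℝ):ℂ)/8 - 1/8) * Complex.I_sq
  -- numerator for proj γ
  have hNγ : (proj ψ * proj γ * ρ).trace
      = (p:ℂ)/2 + ((1:ℂ) - 2*p) * (1 + Complex.I)/4 := by
    rw [hρ']
    simp only [proj_eq_outer]
    simp only [Matrix.mul_add, Matrix.add_mul, mul_smul_comm, smul_mul_assoc,
      Matrix.mul_one, Matrix.one_mul, outer_mul_outer, smul_smul,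
      Matrix.trace_add, Matrix.trace_smul, trace_outer, Matrix.trace_one, smul_eq_mul]
    rw [hψγ, hγψ, hγφ, hφψ]
    have hrr2 : r * r = 1/2 := hrr
    linear_combination ((1:ℂ) + Complex.I) * ((1:ℂ) - 2*(p:ℂ)) / 2 * hrr2
      + (p:ℂ) * hrr2
  -- weak values
  have hWH : gweak ρ ψ H = (((1 + Real.sqrt 2 * (1 - p))/2 : ℝ) : ℂ) := by
    rw [gweak, hNH, hD]
    push_cast
    field_simp
    ring
  have hWγ : gweak ρ ψ (proj γ) = (((1:ℝ)/2 : ℝ) : ℂ) + (((1 - 2*p)/2 : ℝ) : ℂ) * Complex.I := by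
    rw [gweak, hNγ, hD]
    push_cast
    field_simp
    ring
  rw [hWH, hWγ]
  have hre : ((((1 + Real.sqrt 2 * (1 - p))/2 : ℝ) : ℂ)).re = (1 + Real.sqrt 2 * (1 - p))/2 :=
    Complex.ofReal_re _
  rw [hre]
  have him : ((((1:ℝ)/2 : ℝ) : ℂ) + (((1 - 2*p)/2 : ℝ) : ℂ) * Complex.I).im = (1 - 2*p)/2 := by
    simp
  rw [him]
  have hpos : (0:ℝ) < Real.sqrt 2 * (1 - p) := mul_pos hs2 (by linarith)
  rw [abs_of_pos (by linarith : (0:ℝ) < (1 + Real.sqrt 2 * (1 - p))/2)]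
  rcases abs_cases ((1 - 2*p)/2) with ⟨h1, _⟩ | ⟨h1, _⟩ <;> rw [h1] <;> nlinarith
end
end

section
/- Let φ and ψ be unit vectors in ℂ² that are linearly independent and satisfy ⟨ψ, φ⟩ ≠ 0, let I be the 2×2 identity matrix, and set P_{φ,ψ} := (1/2)(|φ⟩⟨φ| + |ψ⟩⟨ψ| − I). Then for a real number s, the matrix s·P_{φ,ψ} + I/2 is a rank-one orthogonal projection (Hermitian, idempotent, of trace 1) if and only if s = 1/|⟨φ, ψ⟩| or s = −1/|⟨φ, ψ⟩|. -/
noncomputable section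

/-- with `P_{φ,ψ} = (1/2)(|φ⟩⟨φ| + |ψ⟩⟨ψ| - I)`, the matrix
`s P_{φ,ψ} + I/2` is a rank-one orthogonal projection iff `s = ±1/|⟨φ,ψ⟩|`. -/
theorem stmt19 (φ ψ : EuclideanSpace ℂ (Fin 2))
    (hφ : ‖φ‖ = 1) (hψ : ‖ψ‖ = 1)
    (hind : LinearIndependent ℂ ![φ, ψ])
    (hno : (inner ℂ ψ φ : ℂ) ≠ 0)
    (P : Matrix (Fin 2) (Fin 2) ℂ)
    (hP : P = (1 / 2 : ℂ) • (proj φ + proj ψ - (1 : Matrix (Fin 2) (Fin 2) ℂ)))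
    (s : ℝ) :
    (((s : ℂ) • P + (1 / 2 : ℂ) • (1 : Matrix (Fin 2) (Fin 2) ℂ)).IsHermitian ∧
      ((s : ℂ) • P + (1 / 2 : ℂ) • (1 : Matrix (Fin 2) (Fin 2) ℂ))
        * ((s : ℂ) • P + (1 / 2 : ℂ) • (1 : Matrix (Fin 2) (Fin 2) ℂ))
        = (s : ℂ) • P + (1 / 2 : ℂ) • (1 : Matrix (Fin 2) (Fin 2) ℂ) ∧
      ((s : ℂ) • P + (1 / 2 : ℂ) • (1 : Matrix (Fin 2) (Fin 2) ℂ)).trace = 1) ↔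
      (s = 1 / ‖(inner ℂ φ ψ : ℂ)‖ ∨ s = -(1 / ‖(inner ℂ φ ψ : ℂ)‖)) := by
  have hφφ : (inner ℂ φ φ : ℂ) = 1 := by
    rw [inner_self_eq_norm_sq_to_K, hφ]; norm_num
  have hψψ : (inner ℂ ψ ψ : ℂ) = 1 := by
    rw [inner_self_eq_norm_sq_to_K, hψ]; norm_num
  have h1 : (starRingEnd ℂ) (φ 0) * φ 0 + (starRingEnd ℂ) (φ 1) * φ 1 = 1 := by
    simp only [PiLp.inner_apply, RCLike.inner_apply, Fin.sum_univ_two] at hφφ; linear_combination hφφ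
  have h2 : (starRingEnd ℂ) (ψ 0) * ψ 0 + (starRingEnd ℂ) (ψ 1) * ψ 1 = 1 := by
    simp only [PiLp.inner_apply, RCLike.inner_apply, Fin.sum_univ_two] at hψψ; linear_combination hψψ
  set w : ℂ := (inner ℂ φ ψ : ℂ) with hw
  have hwe : w = (starRingEnd ℂ) (φ 0) * ψ 0 + (starRingEnd ℂ) (φ 1) * ψ 1 := by
    simp [hw, PiLp.inner_apply, RCLike.inner_apply, Fin.sum_univ_two]; ring
  have hwne : w ≠ 0 := by
    have h5 : (starRingEnd ℂ) w ≠ 0 := by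
      rw [hw, inner_conj_symm]; exact hno
    exact fun h => h5 (by rw [h, map_zero])
  set r : ℝ := ‖w‖ with hr
  have hrpos : 0 < r := norm_pos_iff.mpr hwne
  have hww : w * (starRingEnd ℂ) w = ((r ^ 2 : ℝ) : ℂ) := by
    rw [Complex.mul_conj, Complex.normSq_eq_norm_sq, hr]
  -- P is Hermitian
  have hPH : P.conjTranspose = P := by
    subst hP
    ext i j
    fin_cases i <;> fin_cases j <;>
      simp [proj, Matrix.conjTranspose_apply, Matrix.one_apply, mul_comm]
  -- trace of P is 0
  have hTr : P.trace = 0 := by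
    subst hP
    simp [Matrix.trace, Matrix.diag, proj, Fin.sum_univ_two, Matrix.one_apply]
    linear_combination (1/2 : ℂ) * h1 + (1/2 : ℂ) * h2
  -- P squared
  have hP2 : P * P = ((w * (starRingEnd ℂ) w) / 4) • 1 := by
    subst hP
    ext i j
    fin_cases i <;> fin_cases j <;>
      simp [Matrix.mul_apply, proj, Fin.sum_univ_two, Matrix.one_apply, hwe]
    · linear_combination ((φ 0 * (starRingEnd ℂ) (φ 0) + ψ 0 * (starRingEnd ℂ) (ψ 0) - 1) / 4) * h1
        + ((ψ 0 * (starRingEnd ℂ) (ψ 0) - φ 1 * (starRingEnd ℂ) (φ 1)) / 4) * h2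
    · linear_combination ((φ 0 * (starRingEnd ℂ) (φ 1) + ψ 0 * (starRingEnd ℂ) (ψ 1)) / 4) * (h1 + h2)
    · linear_combination ((φ 1 * (starRingEnd ℂ) (φ 0) + ψ 1 * (starRingEnd ℂ) (ψ 0)) / 4) * (h1 + h2)
    · linear_combination ((φ 1 * (starRingEnd ℂ) (φ 1) + ψ 1 * (starRingEnd ℂ) (ψ 1) - 1) / 4) * h1
        + ((ψ 1 * (starRingEnd ℂ) (ψ 1) - φ 0 * (starRingEnd ℂ) (φ 0)) / 4) * h2
  -- Hermitian part (always true)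
  have hherm : ((s : ℂ) • P + (1 / 2 : ℂ) • (1 : Matrix (Fin 2) (Fin 2) ℂ)).IsHermitian := by
    unfold Matrix.IsHermitian
    rw [Matrix.conjTranspose_add, Matrix.conjTranspose_smul, Matrix.conjTranspose_smul,
      Matrix.conjTranspose_one, hPH]
    norm_num [Complex.star_def, Complex.conj_ofReal]
  -- trace part (always true)
  have htrQ : ((s : ℂ) • P + (1 / 2 : ℂ) • (1 : Matrix (Fin 2) (Fin 2) ℂ)).trace = 1 := by
    simp [Matrix.trace_add, Matrix.trace_smul, hTr, Matrix.trace_one]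
  -- the product, expanded
  have hQQ : ((s : ℂ) • P + (1 / 2 : ℂ) • (1 : Matrix (Fin 2) (Fin 2) ℂ))
        * ((s : ℂ) • P + (1 / 2 : ℂ) • (1 : Matrix (Fin 2) (Fin 2) ℂ))
      = ((s : ℂ) * (s : ℂ) * (w * (starRingEnd ℂ) w) / 4 + 1 / 4) • 1 + (s : ℂ) • P := by
    simp only [add_mul, mul_add, Matrix.smul_mul, Matrix.mul_smul, smul_smul,
      Matrix.mul_one, Matrix.one_mul, hP2]
    module
  -- the idempotence condition, reduced to a real scalar equation
  have hmul_iff : (((s : ℂ) • P + (1 / 2 : ℂ) • (1 : Matrix (Fin 2) (Fin 2) ℂ))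
        * ((s : ℂ) • P + (1 / 2 : ℂ) • (1 : Matrix (Fin 2) (Fin 2) ℂ))
        = (s : ℂ) • P + (1 / 2 : ℂ) • (1 : Matrix (Fin 2) (Fin 2) ℂ)) ↔ s ^ 2 * r ^ 2 = 1 := by
    rw [hQQ]
    constructor
    · intro hm
      have htr := congrArg Matrix.trace hm
      simp only [Matrix.trace_add, Matrix.trace_smul, Matrix.trace_one, hTr,
        Fintype.card_fin, smul_eq_mul] at htr
      have hc : ((s ^ 2 * r ^ 2 : ℝ) : ℂ) = 1 := by
        rw [hww] at htr
        push_cast at htr ⊢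
        linear_combination 2 * htr
      exact_mod_cast hc
    · intro h4
      have hc : (s : ℂ) * (s : ℂ) * (w * (starRingEnd ℂ) w) = 1 := by
        rw [hww]
        have : ((s ^ 2 * r ^ 2 : ℝ) : ℂ) = 1 := by exact_mod_cast h4
        push_cast at this ⊢
        linear_combination this
      rw [hc]
      norm_num
      exact add_comm _ _
  rw [and_iff_right hherm]
  constructor
  · rintro ⟨hm, -⟩
    have h4 := hmul_iff.mp hm
    have hfac : (s * r - 1) * (s * r + 1) = 0 := by ring_nf; linear_combination h4
    rcases mul_eq_zero.mp hfac with h | h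
    · left; field_simp; linear_combination h
    · right; field_simp; linear_combination h
  · intro h
    refine ⟨hmul_iff.mpr ?_, htrQ⟩
    rcases h with rfl | rfl <;> field_simp
end
end
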